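/- arXiv:1805.10112 — 2 statements merged into one kernel-verified Lean document; each statement's English description precedes it below -/
import Mathlib

section
/- Let d ≥ 2 and let G = (V,E) be a finite simple graph in which every vertex has degree exactly d, with |V| ≥ d + 1, and which is d-vertex-connected: for every set S ⊆ V with |S| < d, the induced subgraph on V \ S is connected. Then G is homogeneous: there exists a pmf μ on Γ_G whose edge usage probability η_μ is constant on E. -/
set_option linter.unusedSectionVars false
set_option maxHeartbeats 1000000


noncomputable section
open scoped Classical
open Finset

variable {V : Type*} [Fintype V] [DecidableEq V]

/-- A pmf on a finite family `Γ` of edge sets. -/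
def IsPmf (Γ : Finset (Finset (Sym2 V))) (μ : Finset (Sym2 V) → ℝ) : Prop :=
  (∀ γ, 0 ≤ μ γ) ∧ (∀ γ, γ ∉ Γ → μ γ = 0) ∧ ∑ γ ∈ Γ, μ γ = 1

/-- Edge usage probability. -/
def eta (Γ : Finset (Finset (Sym2 V))) (μ : Finset (Sym2 V) → ℝ) (e : Sym2 V) : ℝ :=
  ∑ γ ∈ Γ.filter (fun γ => e ∈ γ), μ γ

/-- Expected overlap. -/
def EO (Γ : Finset (Finset (Sym2 V))) (μ : Finset (Sym2 V) → ℝ) : ℝ :=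
  ∑ γ ∈ Γ, ∑ γ' ∈ Γ, ((γ ∩ γ').card : ℝ) * μ γ * μ γ'

/-- Minimum expected overlap. -/
def MEO (Γ : Finset (Finset (Sym2 V))) : ℝ :=
  sInf {x : ℝ | ∃ μ, IsPmf Γ μ ∧ x = EO Γ μ}

/-- The set of spanning trees of `G`, as finsets of edges. -/
def spanningTrees (G : SimpleGraph V) : Finset (Finset (Sym2 V)) :=
  Finset.univ.filter (fun γ => ↑γ ⊆ G.edgeSet ∧
    (SimpleGraph.fromEdgeSet (↑γ : Set (Sym2 V))).Connected ∧
    γ.card = Fintype.card V - 1)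

/-- Edges of `G` with both endpoints in `W`. -/
def edgesWithin (G : SimpleGraph V) (W : Finset V) : Finset (Sym2 V) :=
  G.edgeFinset.filter (fun e => ∀ v ∈ e, v ∈ W)

/-- `γ` is a spanning tree of the subgraph of `G` induced by the vertex set `W`. -/
def IsSpanningTreeOn (G : SimpleGraph V) (W : Finset V) (γ : Finset (Sym2 V)) : Prop :=
  γ ⊆ edgesWithin G W ∧
    ((SimpleGraph.fromEdgeSet (↑γ : Set (Sym2 V))).induce (↑W : Set V)).Connected ∧
    γ.card = W.card - 1

def spanningTreesOn (G : SimpleGraph V) (W : Finset V) : Finset (Finset (Sym2 V)) :=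
  Finset.univ.filter (IsSpanningTreeOn G W)

def Adm (Γ : Finset (Finset (Sym2 V))) (ρ : Sym2 V → ℝ) : Prop :=
  (∀ e, 0 ≤ ρ e) ∧ ∀ γ ∈ Γ, 1 ≤ ∑ e ∈ γ, ρ e

def Mod2 (Eset : Finset (Sym2 V)) (Γ : Finset (Finset (Sym2 V))) : ℝ :=
  sInf {x : ℝ | ∃ ρ, Adm Γ ρ ∧ x = ∑ e ∈ Eset, (ρ e) ^ 2}

/-- A fair spanning tree. -/
def IsFair (G : SimpleGraph V) (γ : Finset (Sym2 V)) : Prop :=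
  ∃ μ, IsPmf (spanningTrees G) μ ∧ EO (spanningTrees G) μ = MEO (spanningTrees G) ∧ 0 < μ γ

def IsFeasiblePartition (G : SimpleGraph V) (P : Finset (Finset V)) : Prop :=
  2 ≤ P.card ∧ (∀ p ∈ P, p.Nonempty) ∧ (∀ v : V, ∃! p, p ∈ P ∧ v ∈ p) ∧
    ∀ p ∈ P, (G.induce (↑p : Set V)).Connected

/-- The edges of `G` joining distinct parts of the partition `P`. -/
def cutEdges (G : SimpleGraph V) (P : Finset (Finset V)) : Finset (Sym2 V) :=
  G.edgeFinset.filter (fun e => ¬ ∃ p ∈ P, ∀ v ∈ e, v ∈ p)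

/-- `G` is homogeneous. -/
def IsHomogeneous (G : SimpleGraph V) : Prop :=
  ∃ μ, IsPmf (spanningTrees G) μ ∧
    ∃ c : ℝ, ∀ e ∈ G.edgeFinset, eta (spanningTrees G) μ e = c

namespace STHelp

variable {V : Type*} [Fintype V] [DecidableEq V]

/-- graph from a finset of edges -/
def gf (F : Finset (Sym2 V)) : SimpleGraph V := SimpleGraph.fromEdgeSet (↑F)

noncomputable instance (F : Finset (Sym2 V)) : Fintype (gf F).ConnectedComponent :=
  Fintype.ofFinite _

/-- number of connected components -/
def ncomp (F : Finset (Sym2 V)) : ℕ := Fintype.card (gf F).ConnectedComponent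

lemma gf_mono {F F' : Finset (Sym2 V)} (h : F ⊆ F') : gf F ≤ gf F' :=
  SimpleGraph.fromEdgeSet_mono (by exact_mod_cast h)

lemma ncomp_empty : ncomp (∅ : Finset (Sym2 V)) = Fintype.card V := by
  have h : gf (∅ : Finset (Sym2 V)) = ⊥ := by
    simp [gf]
  have hbij : Function.Bijective ((gf (∅ : Finset (Sym2 V))).connectedComponentMk) := by
    constructor
    · intro a b hab
      have := SimpleGraph.ConnectedComponent.exact hab
      rw [h] at this
      exact SimpleGraph.reachable_bot.mp this
    · intro c
      exact c.exists_rep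
  exact (Fintype.card_of_bijective hbij).symm

/-- the map on components induced by an inclusion -/
def cmap {F F' : Finset (Sym2 V)} (h : F ⊆ F') :
    (gf F).ConnectedComponent → (gf F').ConnectedComponent :=
  SimpleGraph.ConnectedComponent.map (SimpleGraph.Hom.ofLE (gf_mono h))

lemma cmap_mk {F F' : Finset (Sym2 V)} (h : F ⊆ F') (v : V) :
    cmap h ((gf F).connectedComponentMk v) = (gf F').connectedComponentMk v := by
  simp [cmap, SimpleGraph.ConnectedComponent.map_mk]

lemma cmap_surj {F F' : Finset (Sym2 V)} (h : F ⊆ F') : Function.Surjective (cmap h) := by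
  intro c
  obtain ⟨v, hv⟩ := c.exists_rep
  exact ⟨(gf F).connectedComponentMk v, by rw [cmap_mk]; exact hv⟩

lemma ncomp_le {F F' : Finset (Sym2 V)} (h : F ⊆ F') : ncomp F' ≤ ncomp F :=
  Fintype.card_le_of_surjective _ (cmap_surj h)

lemma ncomp_le_card (F : Finset (Sym2 V)) : ncomp F ≤ Fintype.card V :=
  Fintype.card_le_of_surjective _ (fun c => c.exists_rep)

lemma reach_insert_cases {F : Finset (Sym2 V)} {a b x y : V}
    (h : (gf (insert s(a,b) F)).Reachable x y) :
    (gf F).Reachable x y ∨ ((gf F).Reachable x a ∧ (gf F).Reachable b y)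
      ∨ ((gf F).Reachable x b ∧ (gf F).Reachable a y) := by
  obtain ⟨p⟩ := h
  induction p with
  | nil => exact Or.inl (SimpleGraph.Reachable.refl _)
  | @cons u v w huv p ih =>
    have huv' : s(u,v) ∈ insert s(a,b) F ∧ u ≠ v := by
      rwa [gf, SimpleGraph.fromEdgeSet_adj] at huv
    have hne := huv'.2
    rcases Finset.mem_insert.mp huv'.1 with heq | hmem
    · -- the special edge
      rcases Sym2.eq_iff.mp heq with ⟨hua, hvb⟩ | ⟨hub, hva⟩
      · subst hua; subst hvb
        rcases ih with h1 | ⟨h1, h2⟩ | ⟨h1, h2⟩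
        · exact Or.inr (Or.inl ⟨SimpleGraph.Reachable.refl _, h1⟩)
        · exact Or.inr (Or.inl ⟨SimpleGraph.Reachable.refl _, h2⟩)
        · exact Or.inl h2
      · subst hub; subst hva
        rcases ih with h1 | ⟨h1, h2⟩ | ⟨h1, h2⟩
        · exact Or.inr (Or.inr ⟨SimpleGraph.Reachable.refl _, h1⟩)
        · exact Or.inl h2
        · exact Or.inr (Or.inr ⟨SimpleGraph.Reachable.refl _, h2⟩)
    · -- ordinary edge
      have hadj : (gf F).Adj u v := by
        rw [gf, SimpleGraph.fromEdgeSet_adj]; exact ⟨by exact_mod_cast hmem, hne⟩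
      rcases ih with h1 | ⟨h1, h2⟩ | ⟨h1, h2⟩
      · exact Or.inl (hadj.reachable.trans h1)
      · exact Or.inr (Or.inl ⟨hadj.reachable.trans h1, h2⟩)
      · exact Or.inr (Or.inr ⟨hadj.reachable.trans h1, h2⟩)

lemma ncomp_insert_reach {F : Finset (Sym2 V)} {a b : V}
    (hr : (gf F).Reachable a b) : ncomp (insert s(a,b) F) = ncomp F := by
  have hinj : Function.Injective (cmap (Finset.subset_insert s(a,b) F)) := by
    intro x y hxy
    obtain ⟨u, hu⟩ := x.exists_rep
    obtain ⟨v, hv⟩ := y.exists_rep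
    subst hu; subst hv
    have : (gf (insert s(a,b) F)).connectedComponentMk u
        = (gf (insert s(a,b) F)).connectedComponentMk v := by
      rw [← cmap_mk (Finset.subset_insert s(a,b) F) u, ← cmap_mk (Finset.subset_insert s(a,b) F) v]
      exact hxy
    have hre := SimpleGraph.ConnectedComponent.exact this
    rcases reach_insert_cases hre with h1 | ⟨h1, h2⟩ | ⟨h1, h2⟩
    · exact SimpleGraph.ConnectedComponent.sound h1
    · exact SimpleGraph.ConnectedComponent.sound ((h1.trans hr).trans h2)
    · exact SimpleGraph.ConnectedComponent.sound ((h1.trans hr.symm).trans h2)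
  exact (Fintype.card_of_bijective ⟨hinj, cmap_surj _⟩).symm

lemma ncomp_insert_not_reach {F : Finset (Sym2 V)} {a b : V} (hab : a ≠ b)
    (hr : ¬ (gf F).Reachable a b) : ncomp F = ncomp (insert s(a,b) F) + 1 := by
  set π := cmap (Finset.subset_insert s(a,b) F) with hπ
  set B := (gf F).connectedComponentMk b with hB
  set A := (gf F).connectedComponentMk a with hA
  have hAB : A ≠ B := fun h => hr (SimpleGraph.ConnectedComponent.exact h)
  have hadj : (gf (insert s(a,b) F)).Adj a b := by
    rw [gf, SimpleGraph.fromEdgeSet_adj]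
    exact ⟨by exact_mod_cast Finset.mem_insert_self _ _, hab⟩
  have hπAB : π A = π B := by
    show cmap (Finset.subset_insert s(a,b) F) ((gf F).connectedComponentMk a)
      = cmap (Finset.subset_insert s(a,b) F) ((gf F).connectedComponentMk b)
    rw [cmap_mk, cmap_mk]
    exact SimpleGraph.ConnectedComponent.sound hadj.reachable
  have hinj : Set.InjOn π (Finset.univ.erase B : Finset _) := by
    intro x hx y hy hxy
    obtain ⟨u, hu⟩ := x.exists_rep
    obtain ⟨v, hv⟩ := y.exists_rep
    subst hu; subst hv
    have : (gf (insert s(a,b) F)).connectedComponentMk u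
        = (gf (insert s(a,b) F)).connectedComponentMk v := by
      rw [← cmap_mk (Finset.subset_insert s(a,b) F) u, ← cmap_mk (Finset.subset_insert s(a,b) F) v]
      exact hxy
    rcases reach_insert_cases (SimpleGraph.ConnectedComponent.exact this) with
      h1 | ⟨h1, h2⟩ | ⟨h1, h2⟩
    · exact SimpleGraph.ConnectedComponent.sound h1
    · exact absurd (SimpleGraph.ConnectedComponent.sound h2.symm : _ = B)
        (Finset.ne_of_mem_erase hy)
    · exact absurd (SimpleGraph.ConnectedComponent.sound h1 : _ = B)
        (Finset.ne_of_mem_erase hx)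
  have himg : (Finset.univ.erase B).image π = Finset.univ := by
    apply Finset.eq_univ_iff_forall.mpr
    intro c
    obtain ⟨x, hx⟩ := cmap_surj (Finset.subset_insert s(a,b) F) c
    by_cases hxB : x = B
    · exact Finset.mem_image.mpr ⟨A, Finset.mem_erase.mpr ⟨hAB, Finset.mem_univ _⟩,
        by rw [hπAB, ← hxB]; exact hx⟩
    · exact Finset.mem_image.mpr ⟨x, Finset.mem_erase.mpr ⟨hxB, Finset.mem_univ _⟩, hx⟩
  have h1 : ncomp (insert s(a,b) F) = (Finset.univ.erase B).card := by
    rw [ncomp, ← Finset.card_univ, ← himg, Finset.card_image_of_injOn hinj]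
  have h2 : (Finset.univ.erase B).card + 1 = ncomp F := by
    have hne : Nonempty (gf F).ConnectedComponent := ⟨B⟩
    rw [Finset.card_erase_of_mem (Finset.mem_univ _), Finset.card_univ, ncomp]
    have : 0 < Fintype.card (gf F).ConnectedComponent := Fintype.card_pos
    omega
  omega

lemma reach_of_ncomp_eq {F F' : Finset (Sym2 V)} (h : F ⊆ F') (hc : ncomp F = ncomp F')
    {a b : V} (hr : (gf F').Reachable a b) : (gf F).Reachable a b := by
  have hbij : Function.Bijective (cmap h) :=
    (Fintype.bijective_iff_surjective_and_card _).mpr ⟨cmap_surj h, hc⟩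
  have : cmap h ((gf F).connectedComponentMk a) = cmap h ((gf F).connectedComponentMk b) := by
    rw [cmap_mk, cmap_mk]
    exact SimpleGraph.ConnectedComponent.sound hr
  exact SimpleGraph.ConnectedComponent.exact (hbij.1 this)


lemma kruskal : ∀ (l : List (Sym2 V)), l.Nodup → (∀ e ∈ l, ¬ e.IsDiag) →
    ∃ γ : Finset (Sym2 V), γ ⊆ l.toFinset ∧
      (∀ k, (γ ∩ (l.take k).toFinset).card + ncomp ((l.take k).toFinset) = Fintype.card V) ∧
      γ.card + ncomp (γ : Finset (Sym2 V)) = Fintype.card V := by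
  intro l
  induction l using List.reverseRecOn with
  | nil =>
    intro _ _
    refine ⟨∅, by simp, fun k => by simp [ncomp_empty], by simp [ncomp_empty]⟩
  | append_singleton l' e ih =>
    intro hnd hdiag
    have hnd' : l'.Nodup := (List.nodup_append.mp hnd).1
    have henl' : e ∉ l' := by
      have h := List.disjoint_toFinset_iff_disjoint.mpr (List.nodup_append'.mp hnd).2.2
      intro hmem
      exact Finset.disjoint_left.mp h (by simpa using hmem) (by simp)
    obtain ⟨γ', hsub', h1', h2'⟩ := ih hnd' (fun e' he' => hdiag e' (by simp [he']))
    have henF' : e ∉ l'.toFinset := by simpa using henl'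
    have hγ'int : γ' ∩ l'.toFinset = γ' := Finset.inter_eq_left.mpr hsub'
    have hlen : γ'.card + ncomp l'.toFinset = Fintype.card V := by
      have := h1' l'.length
      rwa [List.take_length, hγ'int] at this
    have hcompeq : ncomp γ' = ncomp l'.toFinset := by omega
    have htakemain : ∀ k, k ≤ l'.length → (l' ++ [e]).take k = l'.take k := by
      intro k hk
      rw [List.take_append_of_le_length hk]
    have htakefull : ∀ k, l'.length < k → (l' ++ [e]).take k = l' ++ [e] := by
      intro k hk
      apply List.take_of_length_le
      simp; omega
    have htfins : (l' ++ [e]).toFinset = insert e l'.toFinset := by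
      rw [List.toFinset_append, List.toFinset_cons, List.toFinset_nil,
        Finset.union_comm]
      simp
    -- get endpoints
    induction e using Sym2.ind with
    | _ a b =>
    have hab : a ≠ b := by
      intro h; exact hdiag s(a,b) (by simp) (by simp [h])
    by_cases hR : (gf γ').Reachable a b
    · -- skip the edge
      refine ⟨γ', hsub'.trans (by rw [htfins]; exact Finset.subset_insert _ _), ?_, h2'⟩
      intro k
      rcases le_or_gt k l'.length with hk | hk
      · rw [htakemain k hk]; exact h1' k
      · rw [htakefull k hk, htfins]
        have hRF : (gf l'.toFinset).Reachable a b := hR.mono (gf_mono hsub')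
        rw [ncomp_insert_reach hRF]
        have : γ' ∩ insert s(a,b) l'.toFinset = γ' :=
          Finset.inter_eq_left.mpr (hsub'.trans (Finset.subset_insert _ _))
        rw [this]
        exact hlen
    · -- take the edge
      have hRF : ¬ (gf l'.toFinset).Reachable a b := by
        intro h
        exact hR (reach_of_ncomp_eq hsub' hcompeq h)
      have heγ' : s(a,b) ∉ γ' := fun h => henF' (hsub' h)
      refine ⟨insert s(a,b) γ', ?_, ?_, ?_⟩
      · rw [htfins]
        exact Finset.insert_subset_insert _ hsub'
      · intro k
        rcases le_or_gt k l'.length with hk | hk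
        · rw [htakemain k hk]
          have hnotin : s(a,b) ∉ (l'.take k).toFinset := by
            simp only [List.mem_toFinset]
            intro h
            exact henl' (List.mem_of_mem_take h)
          rw [Finset.insert_inter_of_notMem hnotin]
          exact h1' k
        · rw [htakefull k hk, htfins]
          have hint : (insert s(a,b) γ') ∩ insert s(a,b) l'.toFinset = insert s(a,b) γ' :=
            Finset.inter_eq_left.mpr (Finset.insert_subset_insert _ hsub')
          rw [hint, Finset.card_insert_of_notMem heγ']
          have := ncomp_insert_not_reach hab hRF
          omega
      · rw [Finset.card_insert_of_notMem heγ']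
        have := ncomp_insert_not_reach hab hR
        omega

lemma connected_of_ncomp_one {F : Finset (Sym2 V)} [Nonempty V] (h : ncomp F = 1) :
    (gf F).Connected := by
  rw [SimpleGraph.connected_iff]
  refine ⟨fun u v => ?_, inferInstance⟩
  have : Subsingleton (gf F).ConnectedComponent :=
    Fintype.card_le_one_iff_subsingleton.mp (le_of_eq h)
  exact SimpleGraph.ConnectedComponent.exact (Subsingleton.elim _ _)

lemma ncomp_eq_one_of_connected {F : Finset (Sym2 V)} (h : (gf F).Connected) :
    ncomp F = 1 := by
  have hne : Nonempty V := h.nonempty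
  obtain ⟨v⟩ := hne
  apply Fintype.card_eq_one_iff.mpr
  refine ⟨(gf F).connectedComponentMk v, ?_⟩
  intro c
  obtain ⟨u, hu⟩ := c.exists_rep
  rw [← hu]
  exact SimpleGraph.ConnectedComponent.sound (h.preconnected u v)

lemma gf_edgeFinset (G : SimpleGraph V) : gf G.edgeFinset = G := by
  rw [gf, SimpleGraph.coe_edgeFinset, SimpleGraph.fromEdgeSet_edgeSet]


/-- symmetry of cut counting -/
lemma cut_symm (G : SimpleGraph V) (S : Finset V) :
    ∑ v ∈ S, ((G.neighborFinset v).filter (fun u => u ∉ S)).card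
      = ∑ v ∈ Sᶜ, ((G.neighborFinset v).filter (fun u => u ∈ S)).card := by
  have key : ∀ (T : Finset V) (P : V → Prop),
      ∑ v ∈ T, ((G.neighborFinset v).filter (fun u => P u)).card
        = ∑ p ∈ (Finset.univ ×ˢ Finset.univ : Finset (V × V)),
            if p.1 ∈ T ∧ G.Adj p.1 p.2 ∧ P p.2 then 1 else 0 := by
    intro T P
    rw [Finset.sum_product]
    have e1 := Finset.sum_ite_mem Finset.univ T
      (fun v => ((G.neighborFinset v).filter (fun u => P u)).card)
    rw [Finset.univ_inter] at e1
    rw [← e1]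
    apply Finset.sum_congr rfl
    intro v _
    by_cases hv : v ∈ T
    · rw [if_pos hv, Finset.card_filter]
      have e2 := Finset.sum_ite_mem Finset.univ (G.neighborFinset v)
        (fun u => if P u then 1 else 0)
      rw [Finset.univ_inter] at e2
      rw [← e2]
      apply Finset.sum_congr rfl
      intro u _
      by_cases hu : u ∈ G.neighborFinset v
      · rw [if_pos hu]
        have : G.Adj v u := (SimpleGraph.mem_neighborFinset _ _ _).mp hu
        by_cases hP : P u
        · rw [if_pos hP, if_pos ⟨hv, this, hP⟩]
        · rw [if_neg hP, if_neg (by tauto)]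
      · rw [if_neg hu]
        have : ¬ G.Adj v u := fun h => hu ((SimpleGraph.mem_neighborFinset _ _ _).mpr h)
        rw [if_neg (by tauto)]
    · rw [if_neg hv]
      symm
      apply Finset.sum_eq_zero
      intro u _
      rw [if_neg (by tauto)]
  have k1 := key S (fun u => u ∉ S)
  have k2 := key Sᶜ (fun u => u ∈ S)
  have hmid : ∑ p ∈ (Finset.univ ×ˢ Finset.univ : Finset (V × V)),
        (if p.1 ∈ S ∧ G.Adj p.1 p.2 ∧ p.2 ∉ S then 1 else 0)
      = ∑ p ∈ (Finset.univ ×ˢ Finset.univ : Finset (V × V)),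
        (if p.1 ∈ Sᶜ ∧ G.Adj p.1 p.2 ∧ p.2 ∈ S then 1 else 0) := by
    apply Finset.sum_equiv (Equiv.prodComm V V)
    · intro p
      simp
    · intro p _
      apply if_congr _ rfl rfl
      simp only [Equiv.prodComm_apply, Prod.fst_swap, Prod.snd_swap, Finset.mem_compl]
      constructor
      · rintro ⟨h1, h2, h3⟩
        exact ⟨h3, h2.symm, h1⟩
      · rintro ⟨h1, h2, h3⟩
        exact ⟨h3, h2.symm, h1⟩
  refine Eq.trans ?_ (Eq.trans hmid ?_)
  · convert k1 using 2 <;> congr!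
  · convert k2.symm using 2 <;> congr!

/-- cut lower bound from vertex connectivity -/
lemma cut_ge (G : SimpleGraph V) (d : ℕ) (hd : 2 ≤ d)
    (hreg : ∀ v : V, G.degree v = d)
    (hconn : ∀ S : Finset V, S.card < d →
      (G.induce (↑(Finset.univ \ S) : Set V)).Connected)
    (S : Finset V) (hne : S.Nonempty) (hproper : S ≠ Finset.univ) :
    d ≤ ∑ v ∈ S, ((G.neighborFinset v).filter (fun u => u ∉ S)).card := by
  by_contra hlt
  push_neg at hlt
  set T : Finset V := S.biUnion (fun v => (G.neighborFinset v).filter (fun u => u ∉ S)) with hT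
  have hTS : ∀ u ∈ T, u ∉ S := by
    intro u hu
    obtain ⟨v, _, hv2⟩ := Finset.mem_biUnion.mp hu
    exact (Finset.mem_filter.mp hv2).2
  have hTcard : T.card < d :=
    lt_of_le_of_lt (Finset.card_biUnion_le) hlt
  have hco := hconn T hTcard
  have hsetmem : ∀ v : V, v ∉ T → v ∈ (↑(Finset.univ \ T) : Set V) := by
    intro v hv
    simp [hv]
  -- walks in the induced graph starting in S stay in S
  have hstay : ∀ (u v : (↑(Finset.univ \ T) : Set V))
      (p : (G.induce (↑(Finset.univ \ T) : Set V)).Walk u v), (u : V) ∈ S → (v : V) ∈ S := by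
    intro u v p
    induction p with
    | nil => exact id
    | @cons x y z hxy p ih =>
      intro hx
      apply ih
      have hadj : G.Adj (x : V) (y : V) := hxy
      by_contra hyS
      have : (y : V) ∈ T := Finset.mem_biUnion.mpr
        ⟨x, hx, Finset.mem_filter.mpr ⟨(SimpleGraph.mem_neighborFinset _ _ _).mpr hadj, hyS⟩⟩
      have hy2 := y.2
      simp only [Finset.coe_sdiff, Finset.coe_univ, Set.mem_diff] at hy2
      exact hy2.2 (by exact_mod_cast this)
  by_cases hcase : ∃ y : V, y ∉ S ∧ y ∉ T
  · obtain ⟨y, hy1, hy2⟩ := hcase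
    obtain ⟨x, hx⟩ := hne
    have hxT : x ∉ T := fun h => hTS x h hx
    have hreach := hco.preconnected ⟨x, hsetmem x hxT⟩ ⟨y, hsetmem y hy2⟩
    obtain ⟨p⟩ := hreach
    exact hy1 (hstay _ _ p hx)
  · -- Sᶜ ⊆ T
    push_neg at hcase
    have hScompl : Sᶜ ⊆ T := by
      intro y hy
      exact hcase y (Finset.mem_compl.mp hy)
    have hsne : Sᶜ.Nonempty := by
      rw [← Finset.card_pos]
      by_contra h
      push_neg at h
      apply hproper
      rw [Finset.eq_univ_iff_forall]
      intro v
      by_contra hv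
      have : v ∈ Sᶜ := Finset.mem_compl.mpr hv
      have := Finset.card_pos.mpr ⟨v, this⟩
      omega
    set s := Sᶜ.card with hs
    have hs1 : 1 ≤ s := Finset.card_pos.mpr hsne
    have hsd : s ≤ d - 1 := by
      have := Finset.card_le_card hScompl
      omega
    -- each vertex outside S has many neighbors in S
    have hver : ∀ v ∈ Sᶜ, d + 1 - s ≤ ((G.neighborFinset v).filter (fun u => u ∈ S)).card := by
      intro v hv
      have hsplit := Finset.card_filter_add_card_filter_not
        (s := G.neighborFinset v) (p := fun u => u ∈ S)
      have hdeg : (G.neighborFinset v).card = d := hreg v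
      have hsub : (G.neighborFinset v).filter (fun u => ¬ u ∈ S) ⊆ Sᶜ.erase v := by
        intro u hu
        rw [Finset.mem_erase]
        obtain ⟨hu1, hu2⟩ := Finset.mem_filter.mp hu
        refine ⟨?_, Finset.mem_compl.mpr hu2⟩
        intro h
        subst h
        exact G.irrefl ((SimpleGraph.mem_neighborFinset _ _ _).mp hu1)
      have hle : ((G.neighborFinset v).filter (fun u => ¬ u ∈ S)).card ≤ s - 1 := by
        have := Finset.card_le_card hsub
        rw [Finset.card_erase_of_mem (by exact hv)] at this
        omega
      omega
    have hsum : s * (d + 1 - s) ≤ ∑ v ∈ Sᶜ, ((G.neighborFinset v).filter (fun u => u ∈ S)).card := by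
      calc s * (d + 1 - s) = ∑ _v ∈ Sᶜ, (d + 1 - s) := by rw [Finset.sum_const, smul_eq_mul]
      _ ≤ _ := Finset.sum_le_sum hver
    have hprod : d ≤ s * (d + 1 - s) := by
      obtain ⟨k, hk⟩ : ∃ k, s = k + 1 := ⟨s - 1, by omega⟩
      obtain ⟨r, hr, hr2⟩ : ∃ r, d = k + r ∧ 2 ≤ r := ⟨d - k, by omega, by omega⟩
      have h3 : d + 1 - s = r := by omega
      rw [h3, hk, add_mul, one_mul]
      have h4 : k ≤ k * r := Nat.le_mul_of_pos_right k (by omega)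
      omega
    rw [cut_symm] at hlt
    omega


lemma sym2_cases (e : Sym2 V) : ∃ x y, e = s(x,y) := by
  induction e using Sym2.ind with
  | _ x y => exact ⟨x, y, rfl⟩

/-- handshake with cut for a vertex class -/
lemma comp_handshake (G : SimpleGraph V) (d : ℕ)
    (hreg : ∀ v : V, G.degree v = d) (inK : V → Prop) :
    2 * (G.edgeFinset.filter (fun e => ∀ v ∈ e, inK v)).card
      + ∑ v ∈ Finset.univ.filter inK,
          ((G.neighborFinset v).filter (fun u => ¬ inK u)).card
      = d * (Finset.univ.filter inK).card := by
  set GK : SimpleGraph V := {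
    Adj := fun u v => G.Adj u v ∧ inK u ∧ inK v
    symm := ⟨fun u v h => ⟨h.1.symm, h.2.2, h.2.1⟩⟩
    loopless := ⟨fun v h => G.irrefl h.1⟩ } with hGK
  have hedges : GK.edgeFinset = G.edgeFinset.filter (fun e => ∀ v ∈ e, inK v) := by
    ext e
    obtain ⟨x, y, rfl⟩ := sym2_cases e
    simp only [SimpleGraph.mem_edgeFinset, SimpleGraph.mem_edgeSet, Finset.mem_filter]
    constructor
    · rintro ⟨hadj, hx, hy⟩
      refine ⟨hadj, ?_⟩
      intro v hv
      rcases Sym2.mem_iff.mp hv with rfl | rfl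
      · exact hx
      · exact hy
    · rintro ⟨hE, hall⟩
      exact ⟨hE, hall x (Sym2.mem_mk_left x y), hall y (Sym2.mem_mk_right x y)⟩
  have hdeg : ∀ v : V, GK.degree v
      = if inK v then ((G.neighborFinset v).filter (fun u => inK u)).card else 0 := by
    intro v
    by_cases hv : inK v
    · rw [if_pos hv]
      unfold SimpleGraph.degree
      congr 1
      ext u
      simp only [SimpleGraph.mem_neighborFinset, Finset.mem_filter]
      constructor
      · rintro ⟨h1, _, h3⟩
        exact ⟨h1, h3⟩
      · rintro ⟨h1, h2⟩
        exact ⟨h1, hv, h2⟩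
    · rw [if_neg hv]
      rw [SimpleGraph.degree, Finset.card_eq_zero, Finset.eq_empty_iff_forall_notMem]
      intro u hu
      exact hv ((SimpleGraph.mem_neighborFinset _ _ _).mp hu).2.1
  have hhs := SimpleGraph.sum_degrees_eq_twice_card_edges GK
  have hsum : ∑ v : V, GK.degree v
      = ∑ v ∈ Finset.univ.filter inK, ((G.neighborFinset v).filter (fun u => inK u)).card := by
    rw [← Finset.sum_filter_add_sum_filter_not Finset.univ inK (fun v => GK.degree v)]
    have hz : ∑ v ∈ Finset.univ.filter (fun v => ¬ inK v), GK.degree v = 0 := by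
      apply Finset.sum_eq_zero
      intro v hv
      rw [hdeg v, if_neg (Finset.mem_filter.mp hv).2]
    rw [hz, add_zero]
    apply Finset.sum_congr rfl
    intro v hv
    rw [hdeg v, if_pos (Finset.mem_filter.mp hv).2]
  have hsplit : ∀ v : V, ((G.neighborFinset v).filter (fun u => inK u)).card
      + ((G.neighborFinset v).filter (fun u => ¬ inK u)).card = d := by
    intro v
    rw [Finset.card_filter_add_card_filter_not]
    exact hreg v
  calc 2 * (G.edgeFinset.filter (fun e => ∀ v ∈ e, inK v)).card
        + ∑ v ∈ Finset.univ.filter inK,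
            ((G.neighborFinset v).filter (fun u => ¬ inK u)).card
      = ∑ v ∈ Finset.univ.filter inK,
          (((G.neighborFinset v).filter (fun u => inK u)).card
            + ((G.neighborFinset v).filter (fun u => ¬ inK u)).card) := by
        rw [Finset.sum_add_distrib, ← hedges, ← hhs, hsum]
    _ = ∑ _v ∈ Finset.univ.filter inK, d := Finset.sum_congr rfl (fun v _ => hsplit v)
    _ = d * (Finset.univ.filter inK).card := by rw [Finset.sum_const, smul_eq_mul, mul_comm]

/-- main density estimate -/
lemma density (G : SimpleGraph V) (d : ℕ) (hd : 2 ≤ d)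
    (hreg : ∀ v : V, G.degree v = d)
    (hconn : ∀ S : Finset V, S.card < d →
      (G.induce (↑(Finset.univ \ S) : Set V)).Connected)
    (hn : 3 ≤ Fintype.card V)
    (F : Finset (Sym2 V)) (hF : F ⊆ G.edgeFinset) :
    (Fintype.card V - 1) * F.card ≤ G.edgeFinset.card * (Fintype.card V - ncomp F) := by
  have hnV : Nonempty V := Fintype.card_pos_iff.mp (by omega)
  obtain ⟨v0⟩ := hnV
  set n := Fintype.card V with hn'
  set c := ncomp F with hc'
  set m := G.edgeFinset.card with hm'
  have hc1 : 1 ≤ c := Fintype.card_pos_iff.mpr ⟨(gf F).connectedComponentMk v0⟩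
  have hcn : c ≤ n := ncomp_le_card F
  have hm2 : 2 * m = n * d := by
    have := SimpleGraph.sum_degrees_eq_twice_card_edges G
    have h2 : ∑ v : V, G.degree v = n * d := by
      rw [Finset.sum_congr rfl (fun v _ => hreg v), Finset.sum_const, smul_eq_mul,
        Finset.card_univ]
    omega
  rcases eq_or_lt_of_le hc1 with hc1' | hc2
  · -- one component
    have : n - c = n - 1 := by omega
    rw [this]
    calc (n-1) * F.card ≤ (n-1) * m := Nat.mul_le_mul_left _ (Finset.card_le_card hF)
      _ = m * (n-1) := mul_comm _ _
  · -- at least two components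
    set mr : V → (gf F).ConnectedComponent := (gf F).connectedComponentMk with hmr
    set g : Sym2 V → (gf F).ConnectedComponent := fun e => mr (Quot.out e).1 with hg
    have hfib : F.card = ∑ K ∈ Finset.univ, (F.filter (fun e => g e = K)).card :=
      Finset.card_eq_sum_card_fiberwise (fun e _ => Finset.mem_univ _)
    have hsubK : ∀ K : (gf F).ConnectedComponent, F.filter (fun e => g e = K)
        ⊆ G.edgeFinset.filter (fun e => ∀ v ∈ e, mr v = K) := by
      intro K e he
      obtain ⟨heF, heg⟩ := Finset.mem_filter.mp he
      have heE : e ∈ G.edgeFinset := hF heF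
      obtain ⟨x, y, rfl⟩ := sym2_cases e
      have hxy : x ≠ y := by
        have := G.not_isDiag_of_mem_edgeSet ((SimpleGraph.mem_edgeFinset).mp heE)
        rw [Sym2.isDiag_iff_proj_eq] at this
        exact this
      have hadjF : (gf F).Adj x y := by
        rw [gf, SimpleGraph.fromEdgeSet_adj]
        exact ⟨by exact_mod_cast heF, hxy⟩
      have hmkxy : mr x = mr y := SimpleGraph.ConnectedComponent.sound hadjF.reachable
      have hout : mr x = K := by
        have hmem := Sym2.out_fst_mem s(x,y)
        rcases Sym2.mem_iff.mp hmem with h | h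
        · rw [← heg, hg]
          simp only
          rw [h]
        · rw [← heg, hg]
          simp only
          rw [h, ← hmkxy]
      rw [Finset.mem_filter]
      refine ⟨heE, ?_⟩
      intro v hv
      rcases Sym2.mem_iff.mp hv with rfl | rfl
      · exact hout
      · rw [← hmkxy]; exact hout
    have hKbound : ∀ K : (gf F).ConnectedComponent,
        2 * (G.edgeFinset.filter (fun e => ∀ v ∈ e, mr v = K)).card + d
          ≤ d * (Finset.univ.filter (fun v => mr v = K)).card := by
      intro K
      have hhs := comp_handshake G d hreg (fun v => mr v = K)
      -- the cut is at least d
      set SK := Finset.univ.filter (fun v => mr v = K) with hSK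
      have hne : SK.Nonempty := by
        obtain ⟨w, hw⟩ := K.exists_rep
        exact ⟨w, Finset.mem_filter.mpr ⟨Finset.mem_univ _, hw⟩⟩
      have hproper : SK ≠ Finset.univ := by
        intro h
        obtain ⟨K', hK'⟩ := Fintype.exists_ne_of_one_lt_card hc2 K
        obtain ⟨w, hw⟩ := K'.exists_rep
        have hmem : w ∈ SK := h ▸ Finset.mem_univ w
        have h1 : mr w = K := (Finset.mem_filter.mp hmem).2
        exact hK' (hw.symm.trans h1)
      have hcut := cut_ge G d hd hreg hconn SK hne hproper
      have hcuteq : ∑ v ∈ SK, ((G.neighborFinset v).filter (fun u => u ∉ SK)).card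
          = ∑ v ∈ SK, ((G.neighborFinset v).filter (fun u => ¬ mr u = K)).card := by
        apply Finset.sum_congr rfl
        intro v _
        apply congrArg Finset.card
        apply Finset.filter_congr
        intro u _
        rw [hSK]
        simp
      omega
    -- sum over components
    have hsumSK : ∑ K ∈ (Finset.univ : Finset (gf F).ConnectedComponent),
        (Finset.univ.filter (fun v => mr v = K)).card = n := by
      rw [hn', ← Finset.card_univ (α := V)]
      exact (Finset.card_eq_sum_card_fiberwise (fun v _ => Finset.mem_univ _)).symm
    have hcardCC : (Finset.univ : Finset (gf F).ConnectedComponent).card = c := by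
      rw [Finset.card_univ, hc', ncomp]
    have hkey : 2 * F.card + d * c ≤ d * n := by
      have t1 : F.card ≤ ∑ K ∈ (Finset.univ : Finset (gf F).ConnectedComponent),
          (G.edgeFinset.filter (fun e => ∀ v ∈ e, mr v = K)).card := by
        rw [hfib]
        exact Finset.sum_le_sum (fun K _ => Finset.card_le_card (hsubK K))
      have t2 : ∑ K ∈ (Finset.univ : Finset (gf F).ConnectedComponent),
          (2 * (G.edgeFinset.filter (fun e => ∀ v ∈ e, mr v = K)).card + d)
            ≤ ∑ K ∈ (Finset.univ : Finset (gf F).ConnectedComponent),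
              d * (Finset.univ.filter (fun v => mr v = K)).card :=
        Finset.sum_le_sum (fun K _ => hKbound K)
      have t3 : ∑ K ∈ (Finset.univ : Finset (gf F).ConnectedComponent),
          (2 * (G.edgeFinset.filter (fun e => ∀ v ∈ e, mr v = K)).card + d)
            = 2 * (∑ K ∈ (Finset.univ : Finset (gf F).ConnectedComponent),
                (G.edgeFinset.filter (fun e => ∀ v ∈ e, mr v = K)).card) + c * d := by
        rw [Finset.sum_add_distrib, Finset.sum_const, smul_eq_mul, ← Finset.mul_sum, hcardCC]
      have t4 : ∑ K ∈ (Finset.univ : Finset (gf F).ConnectedComponent),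
          d * (Finset.univ.filter (fun v => mr v = K)).card = d * n := by
        rw [← Finset.mul_sum, hsumSK]
      calc 2 * F.card + d * c
          ≤ 2 * (∑ K ∈ (Finset.univ : Finset (gf F).ConnectedComponent),
              (G.edgeFinset.filter (fun e => ∀ v ∈ e, mr v = K)).card) + d * c :=
            Nat.add_le_add_right (Nat.mul_le_mul_left 2 t1) _
        _ = 2 * (∑ K ∈ (Finset.univ : Finset (gf F).ConnectedComponent),
              (G.edgeFinset.filter (fun e => ∀ v ∈ e, mr v = K)).card) + c * d := by
            rw [Nat.mul_comm d c]
        _ = ∑ K ∈ (Finset.univ : Finset (gf F).ConnectedComponent),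
              (2 * (G.edgeFinset.filter (fun e => ∀ v ∈ e, mr v = K)).card + d) := t3.symm
        _ ≤ _ := t2
        _ = d * n := t4
    have hsplitn : d * n = d * (n - c) + d * c := by
      rw [← Nat.mul_add, Nat.sub_add_cancel hcn]
    have h2F : 2 * F.card ≤ d * (n - c) := by omega
    have h3 : 2 * ((n-1) * F.card) ≤ 2 * (m * (n - c)) := by
      calc 2 * ((n-1) * F.card) = (n-1) * (2 * F.card) := by ring
        _ ≤ (n-1) * (d * (n-c)) := Nat.mul_le_mul_left _ h2F
        _ ≤ n * (d * (n-c)) := Nat.mul_le_mul_right _ (by omega)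
        _ = (n * d) * (n-c) := by ring
        _ = (2 * m) * (n-c) := by rw [hm2]
        _ = 2 * (m * (n-c)) := by ring
    exact Nat.le_of_mul_le_mul_left h3 (by norm_num)


lemma connected_of_hyps (G : SimpleGraph V) (d : ℕ) (hd : 2 ≤ d)
    (hconn : ∀ S : Finset V, S.card < d →
      (G.induce (↑(Finset.univ \ S) : Set V)).Connected) : G.Connected := by
  have h0 := hconn ∅ (by simpa using (by omega : 0 < d))
  rw [Finset.sdiff_empty, Finset.coe_univ] at h0
  exact h0.map (SimpleGraph.induceUnivIso G).toHom (SimpleGraph.induceUnivIso G).toEquiv.surjective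

lemma exists_heavy_tree (G : SimpleGraph V) (d : ℕ) (hd : 2 ≤ d)
    (hreg : ∀ v : V, G.degree v = d)
    (hcard : d + 1 ≤ Fintype.card V)
    (hconn : ∀ S : Finset V, S.card < d →
      (G.induce (↑(Finset.univ \ S) : Set V)).Connected)
    (w : Sym2 V → ℝ) (hw : ∀ e, 0 ≤ w e) :
    ∃ γ ∈ spanningTrees G,
      ((Fintype.card V : ℝ) - 1) / (G.edgeFinset.card : ℝ) * (∑ e ∈ G.edgeFinset, w e)
        ≤ ∑ e ∈ γ, w e := by
  set n := Fintype.card V with hn'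
  have hn : 3 ≤ n := by omega
  have hnV : Nonempty V := Fintype.card_pos_iff.mp (by omega)
  have hGconn : G.Connected := connected_of_hyps G d hd hconn
  set m := G.edgeFinset.card with hm'
  have hm2 : 2 * m = n * d := by
    have := SimpleGraph.sum_degrees_eq_twice_card_edges G
    have h2 : ∑ v : V, G.degree v = n * d := by
      rw [Finset.sum_congr rfl (fun v _ => hreg v), Finset.sum_const, smul_eq_mul,
        Finset.card_univ]
    omega
  have hm0 : 0 < m := by
    rcases Nat.eq_zero_or_pos m with h | h
    · exfalso
      rw [h, Nat.mul_zero] at hm2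
      rcases Nat.mul_eq_zero.mp hm2.symm with h' | h' <;> omega
    · exact h
  have hmR : (0:ℝ) < (m:ℝ) := by exact_mod_cast hm0
  set c : ℝ := ((n : ℝ) - 1) / (m : ℝ) with hc'
  -- sorted list of edges
  set l : List (Sym2 V) := (G.edgeFinset.toList).mergeSort (fun a b => decide (w b ≤ w a))
    with hl'
  have hperm : l.Perm G.edgeFinset.toList := List.mergeSort_perm _ _
  have hnodl : l.Nodup := hperm.nodup_iff.mpr (Finset.nodup_toList _)
  have htf : l.toFinset = G.edgeFinset := by
    ext e
    rw [List.mem_toFinset, hperm.mem_iff, Finset.mem_toList]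
  have hlen : l.length = m := hperm.length_eq.trans (Finset.length_toList _)
  have hsorted : List.Pairwise (fun a b => w b ≤ w a) l := by
    have h := List.pairwise_mergeSort (le := fun a b => decide (w b ≤ w a))
      (fun a b c hab hbc => by
        simp only [decide_eq_true_eq] at *
        linarith)
      (fun a b => by
        simp only [Bool.or_eq_true, decide_eq_true_eq]
        exact le_total (w b) (w a))
      (G.edgeFinset.toList)
    exact h.imp (fun h => of_decide_eq_true h)
  have hdiag : ∀ e ∈ l, ¬ e.IsDiag := by
    intro e he
    have : e ∈ G.edgeFinset := htf ▸ List.mem_toFinset.mpr he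
    exact G.not_isDiag_of_mem_edgeSet ((SimpleGraph.mem_edgeFinset).mp this)
  obtain ⟨γ, hγsub, hk, hforest⟩ := kruskal l hnodl hdiag
  have hγsub' : γ ⊆ G.edgeFinset := htf ▸ hγsub
  have hcompE : ncomp (G.edgeFinset) = 1 :=
    ncomp_eq_one_of_connected (by rw [gf_edgeFinset]; exact hGconn)
  have hklen := hk l.length
  rw [List.take_length, htf, hcompE, Finset.inter_eq_left.mpr hγsub'] at hklen
  have hγcard : γ.card = n - 1 := by omega
  have hγcomp : ncomp γ = 1 := by omega
  have hγconn : (gf γ).Connected := connected_of_ncomp_one hγcomp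
  have hγmem : γ ∈ spanningTrees G := by
    rw [spanningTrees, Finset.mem_filter]
    refine ⟨Finset.mem_univ _, ?_, hγconn, hγcard⟩
    intro e he
    have : e ∈ G.edgeFinset := hγsub' (by exact_mod_cast he)
    exact (SimpleGraph.mem_edgeFinset).mp this
  refine ⟨γ, hγmem, ?_⟩
  -- the weight function indexed by position
  set W : ℕ → ℝ := fun k => if h : k < l.length then w (l.get ⟨k, h⟩) else 0 with hW'
  have hWdef : ∀ k, W k = if h : k < l.length then w (l.get ⟨k, h⟩) else 0 := fun k => rfl
  have hWnn : ∀ k, 0 ≤ W k := by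
    intro k
    rw [hWdef k]
    by_cases h : k < l.length
    · rw [dif_pos h]; exact hw _
    · rw [dif_neg h]
  have hWmono : ∀ k, W (k+1) ≤ W k := by
    intro k
    by_cases h1 : k + 1 < l.length
    · have h0 : k < l.length := by omega
      rw [hWdef k, hWdef (k+1), dif_pos h1, dif_pos h0]
      exact (List.pairwise_iff_get.mp hsorted ⟨k, h0⟩ ⟨k+1, h1⟩ (by simp))
    · calc W (k+1) = 0 := by rw [hWdef (k+1), dif_neg h1]
        _ ≤ W k := hWnn k
  -- bound on partial rank
  have hrb : ∀ j, j ≤ l.length → c * j ≤ ((γ ∩ (l.take j).toFinset).card : ℝ) := by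
    intro j hj
    have hsubF : (l.take j).toFinset ⊆ G.edgeFinset := by
      intro e he
      rw [← htf]
      exact List.mem_toFinset.mpr ((List.take_sublist j l).subset (List.mem_toFinset.mp he))
    have hcardF : (l.take j).toFinset.card = j := by
      rw [List.toFinset_card_of_nodup (hnodl.sublist (List.take_sublist j l))]
      rw [List.length_take]
      omega
    have hdens := density G d hd hreg hconn hn ((l.take j).toFinset) hsubF
    rw [hcardF] at hdens
    have hkj := hk j
    have hle := ncomp_le_card ((l.take j).toFinset)
    have heq : n - ncomp ((l.take j).toFinset) = (γ ∩ (l.take j).toFinset).card := by omega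
    rw [heq] at hdens
    rw [hc', div_mul_eq_mul_div, div_le_iff₀ hmR]
    calc ((n:ℝ) - 1) * j = (((n - 1 : ℕ)) : ℝ) * j := by
          rw [Nat.cast_sub (by omega)]
          norm_num
      _ ≤ ((m : ℕ) : ℝ) * ((γ ∩ (l.take j).toFinset).card : ℝ) := by
          rw [← Nat.cast_mul, ← Nat.cast_mul]
          exact_mod_cast hdens
      _ = ((γ ∩ (l.take j).toFinset).card : ℝ) * (m : ℝ) := by ring
  -- prefix structure
  have hpref : ∀ j (hjl : j < l.length),
      (l.take (j+1)).toFinset = insert (l.get ⟨j, hjl⟩) (l.take j).toFinset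
        ∧ (l.get ⟨j, hjl⟩) ∉ (l.take j).toFinset := by
    intro j hjl
    have htake : l.take (j+1) = l.take j ++ [l.get ⟨j, hjl⟩] := by
      rw [List.take_succ]
      congr 1
      rw [List.getElem?_eq_getElem hjl]
      rfl
    constructor
    · rw [htake, List.toFinset_append, List.toFinset_cons, List.toFinset_nil, Finset.union_comm]
      simp
    · intro hmem
      have hnd2 : (l.take (j+1)).Nodup := hnodl.sublist (List.take_sublist _ l)
      rw [htake] at hnd2
      have := List.disjoint_toFinset_iff_disjoint.mpr (List.nodup_append'.mp hnd2).2.2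
      exact Finset.disjoint_left.mp this hmem (by simp)
  -- main Abel-summation induction
  have claim : ∀ j, j ≤ l.length →
      c * (∑ e ∈ (l.take j).toFinset, w e)
        + (((γ ∩ (l.take j).toFinset).card : ℝ) - c * j) * W j
      ≤ ∑ e ∈ γ ∩ (l.take j).toFinset, w e := by
    intro j
    induction j with
    | zero => simp
    | succ j ih =>
      intro hj1
      have hjl : j < l.length := by omega
      have ihh := ih (by omega)
      obtain ⟨hins, hnotmem⟩ := hpref j hjl
      set x := l.get ⟨j, hjl⟩ with hx'
      have hWj : W j = w x := by rw [hWdef j, dif_pos hjl]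
      rw [hWj] at ihh
      have hsumfull : ∑ e ∈ (l.take (j+1)).toFinset, w e
          = w x + ∑ e ∈ (l.take j).toFinset, w e := by
        rw [hins, Finset.sum_insert hnotmem]
      have hcoef : c * ((j:ℝ)+1) ≤ ((γ ∩ (l.take (j+1)).toFinset).card : ℝ) := by
        have := hrb (j+1) hj1
        push_cast at this
        exact this
      have hQle : W (j+1) ≤ w x := by rw [← hWj]; exact hWmono j
      by_cases hxγ : x ∈ γ
      · have hint : γ ∩ (l.take (j+1)).toFinset = insert x (γ ∩ (l.take j).toFinset) := by
          rw [hins, Finset.inter_comm, Finset.insert_inter_of_mem hxγ, Finset.inter_comm]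
        have hxnot : x ∉ γ ∩ (l.take j).toFinset := fun h => hnotmem (Finset.mem_inter.mp h).2
        have hR : ((γ ∩ (l.take (j+1)).toFinset).card : ℝ)
            = ((γ ∩ (l.take j).toFinset).card : ℝ) + 1 := by
          rw [hint, Finset.card_insert_of_notMem hxnot]
          push_cast
          ring
        rw [hR] at hcoef
        have hstep : (((γ ∩ (l.take j).toFinset).card : ℝ) + 1 - c * ((j:ℝ)+1)) * W (j+1)
            ≤ (((γ ∩ (l.take j).toFinset).card : ℝ) + 1 - c * ((j:ℝ)+1)) * w x :=
          mul_le_mul_of_nonneg_left hQle (by linarith)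
        rw [hint, Finset.sum_insert hxnot, hsumfull, ← hint, hR]
        push_cast
        linarith [ihh, hstep]
      · have hint : γ ∩ (l.take (j+1)).toFinset = γ ∩ (l.take j).toFinset := by
          rw [hins, Finset.inter_comm, Finset.insert_inter_of_notMem hxγ, Finset.inter_comm]
        rw [hint] at hcoef
        have hstep : (((γ ∩ (l.take j).toFinset).card : ℝ) - c * ((j:ℝ)+1)) * W (j+1)
            ≤ (((γ ∩ (l.take j).toFinset).card : ℝ) - c * ((j:ℝ)+1)) * w x :=
          mul_le_mul_of_nonneg_left hQle (by linarith)
        rw [hint, hsumfull]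
        push_cast
        linarith [ihh, hstep]
  have hfin := claim l.length (le_refl _)
  rw [List.take_length, htf, Finset.inter_eq_left.mpr hγsub'] at hfin
  have hWlen : W l.length = 0 := by rw [hW']; simp
  rw [hWlen, mul_zero, add_zero] at hfin
  exact hfin

end STHelp

/-- a `d`-regular, `d`-vertex-connected finite simple graph
(`d ≥ 2`, `|V| ≥ d + 1`) is homogeneous. -/
theorem regular_connected_is_homogeneous
    {V : Type*} [Fintype V] [DecidableEq V]
    (G : SimpleGraph V) (d : ℕ) (hd : 2 ≤ d)
    (hreg : ∀ v : V, G.degree v = d)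
    (hcard : d + 1 ≤ Fintype.card V)
    (hconn : ∀ S : Finset V, S.card < d →
      (G.induce (↑(Finset.univ \ S) : Set V)).Connected) :
    IsHomogeneous G := by
  classical
  set n := Fintype.card V with hn'
  set m := G.edgeFinset.card with hm'
  have hn3 : 3 ≤ n := by omega
  have hm0 : 0 < m := by
    have h2m : 2 * m = n * d := by
      have := SimpleGraph.sum_degrees_eq_twice_card_edges G
      have h2 : ∑ v : V, G.degree v = n * d := by
        rw [Finset.sum_congr rfl (fun v _ => hreg v), Finset.sum_const, smul_eq_mul,
          Finset.card_univ]
      omega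
    rcases Nat.eq_zero_or_pos m with h | h
    · exfalso
      rw [h, Nat.mul_zero] at h2m
      rcases Nat.mul_eq_zero.mp h2m.symm with h' | h' <;> omega
    · exact h
  have hmR : (0:ℝ) < (m:ℝ) := by exact_mod_cast hm0
  set c : ℝ := ((n : ℝ) - 1) / (m : ℝ) with hc'
  have hcm : c * (m:ℝ) = (n:ℝ) - 1 := div_mul_cancel₀ _ (ne_of_gt hmR)
  set Γ := spanningTrees G with hΓ'
  set ind : Finset (Sym2 V) → (Sym2 V → ℝ) := fun γ e => if e ∈ γ then 1 else 0 with hind'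
  have hind_inj : Function.Injective ind := by
    intro γ γ' h
    ext e
    have h2 := congrFun h e
    simp only [hind'] at h2
    by_cases h1 : e ∈ γ <;> by_cases h3 : e ∈ γ' <;> simp [h1, h3] at h2 ⊢
  set s : Finset (Sym2 V → ℝ) := Γ.image ind with hs'
  set xstar : Sym2 V → ℝ := fun e => if e ∈ G.edgeFinset then c else 0 with hxstar'
  have hf_eval : ∀ (f : (Sym2 V → ℝ) →L[ℝ] ℝ) (x : Sym2 V → ℝ),
      f x = ∑ e : Sym2 V, x e * f (Pi.single e (1:ℝ)) := by
    intro f x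
    have hx2 : x = ∑ e : Sym2 V, Pi.single e (x e) := (Finset.univ_sum_single x).symm
    conv_lhs => rw [hx2]
    rw [map_sum]
    apply Finset.sum_congr rfl
    intro e _
    have h3 : Pi.single e (x e) = x e • (Pi.single e (1:ℝ) : Sym2 V → ℝ) := by
      ext v
      by_cases hv : v = e
      · subst hv
        simp
      · simp [Pi.single_eq_of_ne hv]
    rw [h3, map_smul, smul_eq_mul]
  have hx : xstar ∈ convexHull ℝ (↑s : Set (Sym2 V → ℝ)) := by
    by_contra hxmem
    obtain ⟨f, u, hfs, hfx⟩ := geometric_hahn_banach_closed_point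
      (convex_convexHull ℝ _) ((s.finite_toSet.isCompact_convexHull ℝ).isClosed) hxmem
    set w0 : Sym2 V → ℝ := fun e => f (Pi.single e (1:ℝ)) with hw0'
    have hEne : G.edgeFinset.Nonempty := Finset.card_pos.mp hm0
    set b : ℝ := ((G.edgeFinset.image w0).min' (hEne.image w0)) with hb'
    have hble : ∀ e ∈ G.edgeFinset, b ≤ w0 e := by
      intro e he
      exact Finset.min'_le _ _ (Finset.mem_image_of_mem w0 he)
    set w : Sym2 V → ℝ := fun e => if e ∈ G.edgeFinset then w0 e - b else 0 with hw'
    have hwnn : ∀ e, 0 ≤ w e := by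
      intro e
      rw [hw']
      simp only
      by_cases he : e ∈ G.edgeFinset
      · rw [if_pos he]
        have := hble e he
        linarith
      · rw [if_neg he]
    obtain ⟨γ, hγΓ, hγge⟩ := STHelp.exists_heavy_tree G d hd hreg hcard hconn w hwnn
    have hγprop := Finset.mem_filter.mp hγΓ
    have hγsub : γ ⊆ G.edgeFinset := by
      intro e he
      exact (SimpleGraph.mem_edgeFinset).mpr (hγprop.2.1 (by exact_mod_cast he))
    have hγcard : (γ.card : ℝ) = (n:ℝ) - 1 := by
      rw [hγprop.2.2.2, Nat.cast_sub (by omega)]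
      norm_num
      exact hn'.symm
    have hsum_γ : ∑ e ∈ γ, w e = (∑ e ∈ γ, w0 e) - ((n:ℝ)-1) * b := by
      have h4 : ∀ e ∈ γ, w e = w0 e - b := by
        intro e he
        rw [hw']
        simp only
        rw [if_pos (hγsub he)]
      rw [Finset.sum_congr rfl h4, Finset.sum_sub_distrib, Finset.sum_const, nsmul_eq_mul,
        hγcard]
    have hsum_E : ∑ e ∈ G.edgeFinset, w e = (∑ e ∈ G.edgeFinset, w0 e) - (m:ℝ) * b := by
      have h4 : ∀ e ∈ G.edgeFinset, w e = w0 e - b := by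
        intro e he
        rw [hw']
        simp only
        rw [if_pos he]
      rw [Finset.sum_congr rfl h4, Finset.sum_sub_distrib, Finset.sum_const, nsmul_eq_mul]
    have hf_tree : f (ind γ) = ∑ e ∈ γ, w0 e := by
      rw [hf_eval f (ind γ)]
      have h5 : ∀ e : Sym2 V, ind γ e * f (Pi.single e 1)
          = if e ∈ γ then w0 e else 0 := by
        intro e
        rw [hind']
        simp only
        by_cases he : e ∈ γ
        · rw [if_pos he, if_pos he, one_mul, hw0']
        · rw [if_neg he, if_neg he, zero_mul]
      rw [Finset.sum_congr rfl (fun e _ => h5 e)]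
      have h6 := Finset.sum_ite_mem Finset.univ γ w0
      rw [Finset.univ_inter] at h6
      exact h6
    have hf_xstar : f xstar = c * ∑ e ∈ G.edgeFinset, w0 e := by
      rw [hf_eval f xstar]
      have h5 : ∀ e : Sym2 V, xstar e * f (Pi.single e 1)
          = if e ∈ G.edgeFinset then c * w0 e else 0 := by
        intro e
        rw [hxstar']
        simp only
        by_cases he : e ∈ G.edgeFinset
        · rw [if_pos he, if_pos he, hw0']
        · rw [if_neg he, if_neg he, zero_mul]
      rw [Finset.sum_congr rfl (fun e _ => h5 e)]
      have h6 := Finset.sum_ite_mem Finset.univ G.edgeFinset (fun e => c * w0 e)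
      rw [Finset.univ_inter] at h6
      rw [h6, ← Finset.mul_sum]
    -- contradiction
    have hin : ind γ ∈ convexHull ℝ (↑s : Set (Sym2 V → ℝ)) :=
      subset_convexHull ℝ _ (by exact_mod_cast Finset.mem_image_of_mem ind hγΓ)
    have hlt : f (ind γ) < f xstar := lt_trans (hfs _ hin) hfx
    rw [hsum_γ, hsum_E] at hγge
    have hexp : c * ((∑ e ∈ G.edgeFinset, w0 e) - (m:ℝ) * b)
        = f xstar - ((n:ℝ)-1) * b := by
      rw [hf_xstar, mul_sub, ← mul_assoc, hcm]
    rw [hexp, ← hf_tree] at hγge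
    linarith [hlt]
  -- extract the pmf
  rw [hs', Finset.convexHull_eq] at hx
  obtain ⟨Wt, hWt0, hWt1, hWtc⟩ := hx
  set μ : Finset (Sym2 V) → ℝ := fun γ => if γ ∈ Γ then Wt (ind γ) else 0 with hμ'
  have hinjOn : ∀ x ∈ Γ, ∀ y ∈ Γ, ind x = ind y → x = y := fun x _ y _ h => hind_inj h
  have hsum_img : ∀ (g : (Sym2 V → ℝ) → ℝ),
      ∑ y ∈ Γ.image ind, g y = ∑ γ' ∈ Γ, g (ind γ') := fun g => Finset.sum_image hinjOn
  refine ⟨μ, ⟨?_, ?_, ?_⟩, c, ?_⟩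
  · intro γ'
    rw [hμ']
    simp only
    by_cases h : γ' ∈ Γ
    · rw [if_pos h]
      exact hWt0 _ (Finset.mem_image_of_mem ind h)
    · rw [if_neg h]
  · intro γ' h
    rw [hμ']
    simp only
    rw [if_neg h]
  · have h7 : ∀ γ' ∈ Γ, μ γ' = Wt (ind γ') := by
      intro γ' h
      rw [hμ']
      simp only
      rw [if_pos h]
    rw [Finset.sum_congr rfl h7, ← hsum_img]
    exact hWt1
  · intro e he
    have hcm2 := Finset.centerMass_eq_of_sum_1 (Γ.image ind) id hWt1
    have hsum : ∑ y ∈ Γ.image ind, Wt y • y = xstar := by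
      rw [← hWtc, hcm2]
      exact Finset.sum_congr rfl (fun y _ => by simp)
    have happ := congrFun hsum e
    rw [Finset.sum_apply] at happ
    have hxe : xstar e = c := by
      rw [hxstar']
      simp only
      rw [if_pos he]
    rw [hxe] at happ
    rw [hsum_img] at happ
    have h8 : ∀ γ' ∈ Γ, (Wt (ind γ') • ind γ') e = if e ∈ γ' then μ γ' else 0 := by
      intro γ' h
      rw [Pi.smul_apply, smul_eq_mul, hind', hμ']
      simp only
      rw [if_pos h]
      by_cases he' : e ∈ γ'
      · rw [if_pos he', if_pos he', mul_one]
      · rw [if_neg he', if_neg he', mul_zero]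
    rw [Finset.sum_congr rfl h8] at happ
    rw [eta, Finset.sum_filter]
    exact happ
end
end

section
/- Let G = (V,E) be a finite connected simple graph with |V| ≥ 3 that is biconnected (for every vertex v ∈ V, the induced subgraph on V \ {v} is connected) and uniform, meaning that the uniform pmf μ₀ on Γ_G, given by μ₀(γ) = 1/|Γ_G| for every γ ∈ Γ_G, is MEO-optimal. Then G is homogeneous: there exists a pmf μ on Γ_G whose edge usage probability η_μ is constant on E (equivalently, η_{μ₀} is constant on E). -/
set_option linter.unusedSectionVars false


noncomputable section
open scoped Classical
open Finset

variable {V : Type*} [Fintype V] [DecidableEq V]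

/-- The uniform pmf on the spanning trees of `G`. -/
def uniformPmf {V : Type*} [Fintype V] [DecidableEq V] (G : SimpleGraph V) :
    Finset (Sym2 V) → ℝ :=
  fun γ => if γ ∈ spanningTrees G then ((spanningTrees G).card : ℝ)⁻¹ else 0


namespace STAux
open SimpleGraph Walk

variable {V : Type*} [Fintype V] [DecidableEq V]

lemma reach_of_walk {H H' : SimpleGraph V}
    (hAdj : ∀ a b : V, H.Adj a b → H'.Reachable a b) :
    ∀ {u w : V}, H.Walk u w → H'.Reachable u w := by
  intro u w p
  induction p with
  | nil => exact Reachable.refl _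
  | cons h q ih => exact (hAdj _ _ h).trans ih

lemma connected_sdiff_of_reachable {H : SimpleGraph V} (hc : H.Connected) {a b : V}
    (hr : (H \ SimpleGraph.fromEdgeSet {s(a,b)}).Reachable a b) :
    (H \ SimpleGraph.fromEdgeSet {s(a,b)}).Connected := by
  have hne : Nonempty V := hc.nonempty
  refine Connected.mk (fun u w => ?_)
  obtain ⟨p⟩ := hc.preconnected u w
  refine reach_of_walk (fun x y hxy => ?_) p
  by_cases hxy' : s(x,y) = s(a,b)
  · rw [Sym2.eq_iff] at hxy'
    rcases hxy' with ⟨rfl, rfl⟩ | ⟨rfl, rfl⟩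
    · exact hr
    · exact hr.symm
  · refine SimpleGraph.Adj.reachable ?_
    rw [sdiff_adj]
    exact ⟨hxy, fun hcon => hxy' (((fromEdgeSet_adj _).1 hcon).1)⟩

lemma fromEdgeSet_erase (δ : Finset (Sym2 V)) {a b : V} :
    SimpleGraph.fromEdgeSet (↑(δ.erase s(a,b)) : Set (Sym2 V)) =
      SimpleGraph.fromEdgeSet (↑δ : Set (Sym2 V)) \ SimpleGraph.fromEdgeSet {s(a,b)} := by
  ext u w
  simp only [fromEdgeSet_adj, sdiff_adj, Finset.coe_erase, Set.mem_diff, Finset.mem_coe,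
    Set.mem_singleton_iff]
  tauto

lemma exists_tree_subset (γ : Finset (Sym2 V)) (hdiag : ∀ e ∈ γ, ¬ e.IsDiag)
    (hc : (SimpleGraph.fromEdgeSet (↑γ : Set (Sym2 V))).Connected) :
    ∃ δ ⊆ γ, (SimpleGraph.fromEdgeSet (↑δ : Set (Sym2 V))).IsTree ∧
      δ.card + 1 = Fintype.card V := by
  classical
  set S := γ.powerset.filter (fun δ : Finset (Sym2 V) => (fromEdgeSet (↑δ : Set (Sym2 V))).Connected) with hS
  have hγS : γ ∈ S := by simp [hS, hc]
  obtain ⟨δ, hδS, hmin⟩ := S.exists_min_image Finset.card ⟨γ, hγS⟩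
  simp only [hS, Finset.mem_filter, Finset.mem_powerset] at hδS
  obtain ⟨hsub, hconn⟩ := hδS
  have hdiagδ : ∀ e ∈ δ, ¬e.IsDiag := fun e he => hdiag e (hsub he)
  have hacyc : (fromEdgeSet (↑δ : Set (Sym2 V))).IsAcyclic := by
    rw [isAcyclic_iff_forall_edge_isBridge]
    intro e he
    revert he
    induction e using Sym2.ind with
    | _ a b =>
    intro he
    by_contra hbr
    have hadj : (fromEdgeSet (↑δ : Set (Sym2 V))).Adj a b := he
    rw [isBridge_iff] at hbr
    push_neg at hbr
    have hreach := hbr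
    have hconn' := connected_sdiff_of_reachable hconn hreach
    rw [← fromEdgeSet_erase δ] at hconn'
    have hmem : s(a,b) ∈ δ := ((fromEdgeSet_adj _).1 hadj).1
    have hSmem : δ.erase s(a,b) ∈ S := by
      simp only [hS, Finset.mem_filter, Finset.mem_powerset]
      exact ⟨(Finset.erase_subset _ _).trans hsub, hconn'⟩
    have h1 := hmin _ hSmem
    have h2 := Finset.card_erase_lt_of_mem hmem
    omega
  have htree : (fromEdgeSet (↑δ : Set (Sym2 V))).IsTree := ⟨hconn, hacyc⟩
  refine ⟨δ, hsub, htree, ?_⟩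
  have hef : (fromEdgeSet (↑δ : Set (Sym2 V))).edgeFinset = δ := by
    ext e
    rw [mem_edgeFinset, edgeSet_fromEdgeSet, Set.mem_diff]
    constructor
    · exact fun h => h.1
    · exact fun h => ⟨h, hdiagδ e h⟩
  have := htree.card_edgeFinset
  rwa [hef] at this

end STAux

namespace STAux
open SimpleGraph Walk

variable {V : Type*} [Fintype V] [DecidableEq V] {T : SimpleGraph V}

def upath (hT : T.IsTree) (x y : V) : T.Walk x y := (hT.existsUnique_path x y).choose

lemma upath_isPath (hT : T.IsTree) (x y : V) : (upath hT x y).IsPath :=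
  (hT.existsUnique_path x y).choose_spec.1

lemma upath_eq (hT : T.IsTree) {x y : V} (p : T.Walk x y) (hp : p.IsPath) :
    p = upath hT x y :=
  (hT.existsUnique_path x y).choose_spec.2 p hp

def firstEdge {x y : V} (p : T.Walk x y) : Sym2 V := s(x, p.getVert 1)

lemma firstEdge_cons {x y z : V} (h : T.Adj x y) (q : T.Walk y z) :
    firstEdge (Walk.cons h q) = s(x, y) := by
  rw [firstEdge, Walk.getVert_cons _ _ one_ne_zero, Nat.sub_self, Walk.getVert_zero]

lemma firstEdge_mem {x y : V} (p : T.Walk x y) (hxy : x ≠ y) : firstEdge p ∈ p.edges := by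
  cases p with
  | nil => exact absurd rfl hxy
  | cons h q => rw [firstEdge_cons]; simp [Walk.edges_cons]

lemma takeUntil_cons {x y z u : V} (h : T.Adj x y) (q : T.Walk y z) (hu' : u ∈ q.support)
    (hne : x ≠ u) :
    (Walk.cons h q).takeUntil u (by simp [hu']) = Walk.cons h (q.takeUntil u hu') := by
  simp [Walk.takeUntil, hne]

lemma firstEdge_takeUntil {x y u : V} (p : T.Walk x y) (hu : u ∈ p.support) (hne : x ≠ u) :
    firstEdge (p.takeUntil u hu) = firstEdge p := by
  cases p with
  | nil =>
    rw [Walk.mem_support_nil_iff] at hu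
    exact absurd hu.symm hne
  | cons h q =>
    have hu' : u ∈ q.support := by
      rw [Walk.support_cons, List.mem_cons] at hu
      exact hu.resolve_left (fun hh => hne hh.symm)
    rw [takeUntil_cons h q hu' hne, firstEdge_cons, firstEdge_cons]

lemma isPath_concat {x y z : V} {p : T.Walk x y} (hp : p.IsPath) (h : T.Adj y z)
    (hz : z ∉ p.support) : (p.concat h).IsPath := by
  have h1 : (Walk.cons h.symm p.reverse).IsPath :=
    hp.reverse.cons (by rwa [Walk.support_reverse, List.mem_reverse])
  have h2 := h1.reverse
  rwa [Walk.reverse_cons, Walk.reverse_reverse] at h2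

lemma firstEdge_concat {x y z : V} (p : T.Walk x y) (h : T.Adj y z) (hx : x ≠ y) :
    firstEdge (p.concat h) = firstEdge p := by
  cases p with
  | nil => exact absurd rfl hx
  | cons h0 q => rw [Walk.concat_cons, firstEdge_cons, firstEdge_cons]

end STAux

namespace STAux
open SimpleGraph Walk

variable {V : Type*} [Fintype V] [DecidableEq V] {T : SimpleGraph V}

lemma case1 (hT : T.IsTree) (W : Sym2 V → ℝ) {v u u' : V} (hu : u ≠ v) (hu' : u' ≠ v)
    (h : T.Adj u u') :
    W (firstEdge (upath hT v u)) = W (firstEdge (upath hT v u')) := by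
  by_cases hmem : u ∈ (upath hT v u').support
  · have h1 : (upath hT v u').takeUntil u hmem = upath hT v u :=
      upath_eq hT _ ((upath_isPath hT v u').takeUntil hmem)
    rw [← h1, firstEdge_takeUntil _ hmem (Ne.symm hu)]
  · have hpath : ((upath hT v u').concat h.symm).IsPath :=
      isPath_concat (upath_isPath hT v u') h.symm hmem
    have h1 : (upath hT v u').concat h.symm = upath hT v u := upath_eq hT _ hpath
    rw [← h1, firstEdge_concat _ _ (Ne.symm hu')]

lemma valwalk (hT : T.IsTree) (W : Sym2 V → ℝ) {v : V} :
    ∀ {a b : V} (q : T.Walk a b), v ∉ q.support →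
      W (firstEdge (upath hT v a)) = W (firstEdge (upath hT v b)) := by
  intro a b q
  induction q with
  | nil => exact fun _ => rfl
  | @cons a c b h q ih =>
    intro hv
    rw [Walk.support_cons, List.mem_cons] at hv
    push_neg at hv
    have ha : a ≠ v := fun hh => hv.1 hh.symm
    have hc : c ≠ v := fun hh => hv.2 (hh ▸ q.start_mem_support)
    exact (case1 hT W ha hc h).trans (ih hv.2)

lemma cross {G : SimpleGraph V} {γ : Finset (Sym2 V)}
    (hT : (SimpleGraph.fromEdgeSet (↑γ : Set (Sym2 V))).IsTree) (W : Sym2 V → ℝ)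
    (hsw : ∀ x y : V, G.Adj x y → s(x,y) ∉ γ →
      ∀ f ∈ (upath hT x y).edges, W s(x,y) = W f)
    {v u u' : V} (hu : u ≠ v) (hu' : u' ≠ v) (hadj : G.Adj u u') :
    W (firstEdge (upath hT v u)) = W (firstEdge (upath hT v u')) := by
  by_cases hmem : s(u,u') ∈ γ
  · have hTadj : (SimpleGraph.fromEdgeSet (↑γ : Set (Sym2 V))).Adj u u' :=
      (fromEdgeSet_adj _).2 ⟨hmem, hadj.ne⟩
    refine valwalk hT W (Walk.cons hTadj Walk.nil) ?_
    simp only [Walk.support_cons, Walk.support_nil, List.mem_cons, List.mem_singleton]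
    push_neg
    exact ⟨fun hh => hu hh.symm, fun hh => hu' hh.symm, by simp⟩
  · by_cases hv : v ∈ (upath hT u u').support
    · have hq1 : ((upath hT u u').takeUntil v hv).reverse = upath hT v u :=
        upath_eq hT _ ((upath_isPath hT u u').takeUntil hv).reverse
      have hq2 : (upath hT u u').dropUntil v hv = upath hT v u' :=
        upath_eq hT _ ((upath_isPath hT u u').dropUntil hv)
      have f1mem : firstEdge (((upath hT u u').takeUntil v hv).reverse) ∈
          (upath hT u u').edges := by
        have h1 := firstEdge_mem (((upath hT u u').takeUntil v hv).reverse)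
          (fun hh => hu hh.symm)
        rw [Walk.edges_reverse, List.mem_reverse] at h1
        exact (upath hT u u').edges_takeUntil_subset hv h1
      have f2mem : firstEdge ((upath hT u u').dropUntil v hv) ∈ (upath hT u u').edges := by
        have h1 := firstEdge_mem ((upath hT u u').dropUntil v hv) (fun hh => hu' hh.symm)
        exact (upath hT u u').edges_dropUntil_subset hv h1
      rw [← hq1, ← hq2]
      rw [← hsw u u' hadj hmem _ f1mem, ← hsw u u' hadj hmem _ f2mem]
    · exact valwalk hT W (upath hT u u') hv

end STAux

namespace STAux
open SimpleGraph Walk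

variable {V : Type*} [Fintype V] [DecidableEq V]

lemma indwalk {G : SimpleGraph V} {γ : Finset (Sym2 V)}
    (hT : (SimpleGraph.fromEdgeSet (↑γ : Set (Sym2 V))).IsTree) (W : Sym2 V → ℝ)
    (hsw : ∀ x y : V, G.Adj x y → s(x,y) ∉ γ →
      ∀ f ∈ (upath hT x y).edges, W s(x,y) = W f)
    {v : V} {A B : ({v}ᶜ : Set V)} (p : (G.induce ({v}ᶜ : Set V)).Walk A B) :
    W (firstEdge (upath hT v A.1)) = W (firstEdge (upath hT v B.1)) := by
  induction p with
  | nil => rfl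
  | @cons A C B h q ih =>
    have hadj : G.Adj A.1 C.1 := h
    have hA : A.1 ≠ v := A.2
    have hC : C.1 ≠ v := C.2
    exact (cross hT W hsw hA hC hadj).trans ih

lemma const_on_nbrs {G : SimpleGraph V} {γ : Finset (Sym2 V)}
    (hT : (SimpleGraph.fromEdgeSet (↑γ : Set (Sym2 V))).IsTree) (W : Sym2 V → ℝ)
    (hsw : ∀ x y : V, G.Adj x y → s(x,y) ∉ γ →
      ∀ f ∈ (upath hT x y).edges, W s(x,y) = W f)
    (hbi : ∀ v : V, (G.induce ({v}ᶜ : Set V)).Connected)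
    {v a b : V} (ha : (SimpleGraph.fromEdgeSet (↑γ : Set (Sym2 V))).Adj v a)
    (hb : (SimpleGraph.fromEdgeSet (↑γ : Set (Sym2 V))).Adj v b) :
    W s(v,a) = W s(v,b) := by
  have key : ∀ {c : V} (hc : (SimpleGraph.fromEdgeSet (↑γ : Set (Sym2 V))).Adj v c),
      upath hT v c = Walk.cons hc Walk.nil := by
    intro c hc
    exact (upath_eq hT (Walk.cons hc Walk.nil)
      (Walk.IsPath.nil.cons (by simp [hc.ne]))).symm
  have hva : W (firstEdge (upath hT v a)) = W s(v,a) := by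
    rw [key ha, firstEdge_cons]
  have hvb : W (firstEdge (upath hT v b)) = W s(v,b) := by
    rw [key hb, firstEdge_cons]
  rw [← hva, ← hvb]
  have hamem : a ∈ ({v}ᶜ : Set V) := by simp [ha.ne']
  have hbmem : b ∈ ({v}ᶜ : Set V) := by simp [hb.ne']
  obtain ⟨p⟩ := (hbi v).preconnected ⟨a, hamem⟩ ⟨b, hbmem⟩
  exact indwalk hT W hsw p

lemma W_edges {T : SimpleGraph V} {γ : Finset (Sym2 V)}
    (hTeq : T = SimpleGraph.fromEdgeSet (↑γ : Set (Sym2 V))) (W : Sym2 V → ℝ)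
    (hnbr : ∀ {v a b : V}, (SimpleGraph.fromEdgeSet (↑γ : Set (Sym2 V))).Adj v a →
      (SimpleGraph.fromEdgeSet (↑γ : Set (Sym2 V))).Adj v b → W s(v,a) = W s(v,b)) :
    ∀ {x y : V} (p : T.Walk x y) {f g : Sym2 V}, f ∈ p.edges → g ∈ p.edges → W f = W g := by
  subst hTeq
  intro x y p
  induction p with
  | nil => intro f g hf _; simp at hf
  | @cons a c b h q ih =>
    intro f g hf hg
    have aux : ∀ e ∈ q.edges, W e = W s(a,c) := by
      intro e he
      cases q with
      | nil => simp at he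
      | @cons c d b h' q' =>
        have h1 : W s(c,d) = W s(a,c) := by
          have := hnbr h' h.symm
          rwa [show s(c,a) = s(a,c) from Sym2.eq_swap] at this
        exact (ih he (by simp [Walk.edges_cons])).trans h1
    rw [Walk.edges_cons, List.mem_cons] at hf hg
    rcases hf with rfl | hf <;> rcases hg with rfl | hg
    · rfl
    · exact (aux g hg).symm
    · exact aux f hf
    · exact (aux f hf).trans (aux g hg).symm

end STAux

namespace STAux
open SimpleGraph Walk

variable {V : Type*} [Fintype V] [DecidableEq V]

lemma W_const_all {G : SimpleGraph V} {γ : Finset (Sym2 V)}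
    (hγG : (↑γ : Set (Sym2 V)) ⊆ G.edgeSet)
    (hT : (SimpleGraph.fromEdgeSet (↑γ : Set (Sym2 V))).IsTree) (W : Sym2 V → ℝ)
    (hsw : ∀ x y : V, G.Adj x y → s(x,y) ∉ γ →
      ∀ f ∈ (upath hT x y).edges, W s(x,y) = W f)
    (hbi : ∀ v : V, (G.induce ({v}ᶜ : Set V)).Connected) :
    ∀ e ∈ G.edgeSet, ∀ e' ∈ G.edgeSet, W e = W e' := by
  set T := SimpleGraph.fromEdgeSet (↑γ : Set (Sym2 V)) with hTeq
  have hAdjOfMem : ∀ {a b : V}, s(a,b) ∈ γ → T.Adj a b := by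
    intro a b hab
    refine (fromEdgeSet_adj _).2 ⟨hab, ?_⟩
    intro hh
    exact G.not_isDiag_of_mem_edgeSet (hγG hab) (by rw [hh]; exact Sym2.mk_isDiag_iff.2 rfl)
  have htreeconst : ∀ f ∈ γ, ∀ f' ∈ γ, W f = W f' := by
    intro f hf f' hf'
    induction f using Sym2.ind with
    | _ a b =>
    induction f' using Sym2.ind with
    | _ a' b' =>
    have h1 : T.Adj a b := hAdjOfMem hf
    have h2 : T.Adj a' b' := hAdjOfMem hf'
    obtain ⟨r⟩ := hT.isConnected.preconnected b a'
    have hp : s(a,b) ∈ (Walk.cons h1 (r.append (Walk.cons h2 Walk.nil))).edges := by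
      simp
    have hp' : s(a',b') ∈ (Walk.cons h1 (r.append (Walk.cons h2 Walk.nil))).edges := by
      simp
    exact W_edges rfl W (fun ha hb => const_on_nbrs hT W hsw hbi ha hb) _ hp hp'
  have hreduce : ∀ e ∈ G.edgeSet, ∃ f ∈ γ, W e = W f := by
    intro e he
    revert he
    induction e using Sym2.ind with
    | _ x y =>
    intro he
    have hadj : G.Adj x y := he
    by_cases hmem : s(x,y) ∈ γ
    · exact ⟨s(x,y), hmem, rfl⟩
    · have hne : x ≠ y := hadj.ne
      have hfmem := firstEdge_mem (upath hT x y) hne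
      refine ⟨firstEdge (upath hT x y), ?_, hsw x y hadj hmem _ hfmem⟩
      have := (upath hT x y).edges_subset_edgeSet hfmem
      rw [edgeSet_fromEdgeSet, Set.mem_diff] at this
      exact this.1
  intro e he e' he'
  obtain ⟨f, hf, hef⟩ := hreduce e he
  obtain ⟨f', hf', hef'⟩ := hreduce e' he'
  rw [hef, hef']
  exact htreeconst f hf f' hf'

end STAux

namespace STAux
open SimpleGraph Walk

variable {V : Type*} [Fintype V] [DecidableEq V]

lemma mem_spanningTrees_iff {G : SimpleGraph V} {γ : Finset (Sym2 V)} :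
    γ ∈ spanningTrees G ↔ (↑γ : Set (Sym2 V)) ⊆ G.edgeSet ∧
      (SimpleGraph.fromEdgeSet (↑γ : Set (Sym2 V))).Connected ∧
      γ.card = Fintype.card V - 1 := by
  simp [spanningTrees]

lemma spanningTrees_nonempty {G : SimpleGraph V} (hG : G.Connected) :
    (spanningTrees G).Nonempty := by
  have hfe : SimpleGraph.fromEdgeSet (↑G.edgeFinset : Set (Sym2 V)) = G := by
    rw [coe_edgeFinset, fromEdgeSet_edgeSet]
  obtain ⟨δ, hsub, htree, hcard⟩ := exists_tree_subset G.edgeFinset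
    (fun e he => G.not_isDiag_of_mem_edgeSet (mem_edgeFinset.1 he))
    (by rw [hfe]; exact hG)
  refine ⟨δ, mem_spanningTrees_iff.2 ⟨?_, htree.isConnected, by omega⟩⟩
  intro e he
  exact mem_edgeFinset.1 (hsub he)

lemma isTree_of_mem_spanningTrees {G : SimpleGraph V} {γ : Finset (Sym2 V)}
    (h : γ ∈ spanningTrees G) :
    (SimpleGraph.fromEdgeSet (↑γ : Set (Sym2 V))).IsTree := by
  obtain ⟨hsub, hconn, hcard⟩ := mem_spanningTrees_iff.1 h
  obtain ⟨δ, hδ, htree, hc⟩ := exists_tree_subset γ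
    (fun e he => G.not_isDiag_of_mem_edgeSet (hsub he)) hconn
  have heq : δ = γ := Finset.eq_of_subset_of_card_le hδ (by omega)
  rwa [← heq]

/-- The swap lemma: exchanging a path edge for a non-tree edge gives a spanning tree. -/
lemma swap_mem_spanningTrees {G : SimpleGraph V} {γ : Finset (Sym2 V)}
    (hγ : γ ∈ spanningTrees G)
    (hT : (SimpleGraph.fromEdgeSet (↑γ : Set (Sym2 V))).IsTree)
    {x y : V} (hxy : G.Adj x y) (hnm : s(x,y) ∉ γ)
    {f : Sym2 V} (hf : f ∈ (upath hT x y).edges) :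
    insert s(x,y) (γ.erase f) ∈ spanningTrees G := by
  obtain ⟨hsub, hconn, hcard⟩ := mem_spanningTrees_iff.1 hγ
  set T := SimpleGraph.fromEdgeSet (↑γ : Set (Sym2 V)) with hTeq
  have hfγ : f ∈ γ := by
    have := (upath hT x y).edges_subset_edgeSet hf
    rw [hTeq, edgeSet_fromEdgeSet, Set.mem_diff] at this
    exact this.1
  have hfG : f ∈ G.edgeSet := hsub hfγ
  have hfne : f ≠ s(x,y) := fun hh => hnm (hh ▸ hfγ)
  -- the augmented graph H
  set H := SimpleGraph.fromEdgeSet (↑(insert s(x,y) γ) : Set (Sym2 V)) with hHeq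
  have hTH : T ≤ H := by
    rw [hTeq, hHeq]
    exact fromEdgeSet_mono (by rw [Finset.coe_insert]; exact Set.subset_insert _ _)
  have hHconn : H.Connected := hconn.mono hTH
  have hHxy : H.Adj y x := by
    rw [hHeq, fromEdgeSet_adj]
    constructor
    · rw [Finset.coe_insert]; left; exact Sym2.eq_swap
    · exact hxy.ne'
  -- name the endpoints of f
  revert hf hfγ hfG hfne
  induction f using Sym2.ind with
  | _ a b =>
  intro hf hfγ hfG hfne
  have hedgesH : ∀ e ∈ (upath hT x y).edges, e ∈ H.edgeSet := by
    intro e he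
    exact (edgeSet_subset_edgeSet.2 hTH : T.edgeSet ⊆ H.edgeSet)
      ((upath hT x y).edges_subset_edgeSet he)
  set p' := (upath hT x y).transfer H hedgesH with hp'def
  have hp'path : p'.IsPath := (upath_isPath hT x y).transfer _
  have hp'edges : p'.edges = (upath hT x y).edges := Walk.edges_transfer _ _
  have hxyne : s(y,x) ∉ p'.edges := by
    rw [hp'edges]
    intro hmem
    apply hnm
    have := (upath hT x y).edges_subset_edgeSet hmem
    rw [hTeq, edgeSet_fromEdgeSet, Set.mem_diff] at this
    rw [show s(x,y) = s(y,x) from Sym2.eq_swap]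
    exact this.1
  have hcyc : (Walk.cons hHxy p').IsCycle := by
    rw [Walk.cons_isCycle_iff]
    exact ⟨hp'path, hxyne⟩
  have hfc : s(a,b) ∈ (Walk.cons hHxy p').edges := by
    rw [Walk.edges_cons, List.mem_cons]
    right
    rw [hp'edges]
    exact hf
  have hreach := (adj_and_reachable_delete_edges_iff_exists_cycle.mpr
    ⟨y, Walk.cons hHxy p', hcyc, hfc⟩).2
  have hconn2 := connected_sdiff_of_reachable hHconn hreach
  have hgraph : SimpleGraph.fromEdgeSet (↑(insert s(x,y) (γ.erase s(a,b))) : Set (Sym2 V)) =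
      H \ SimpleGraph.fromEdgeSet {s(a,b)} := by
    rw [← Finset.erase_insert_of_ne (Ne.symm hfne), fromEdgeSet_erase, hHeq]
  have hmem1 : s(x,y) ∉ γ.erase s(a,b) := fun hh => hnm (Finset.mem_of_mem_erase hh)
  have hcard0 : 0 < γ.card := Finset.card_pos.2 ⟨_, hfγ⟩
  refine mem_spanningTrees_iff.2 ⟨?_, ?_, ?_⟩
  · intro e he
    rw [Finset.coe_insert, Set.mem_insert_iff] at he
    rcases he with rfl | he
    · exact hxy
    · exact hsub (Finset.mem_of_mem_erase he)
  · rw [hgraph]; exact hconn2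
  · rw [Finset.card_insert_of_notMem hmem1, Finset.card_erase_of_mem hfγ]
    omega

end STAux

namespace STAux
open SimpleGraph

variable {V : Type*} [Fintype V] [DecidableEq V]

lemma sum_eta (Γ : Finset (Finset (Sym2 V))) (μ : Finset (Sym2 V) → ℝ)
    (γ₁ : Finset (Sym2 V)) :
    ∑ e ∈ γ₁, eta Γ μ e = ∑ γ ∈ Γ, ((γ₁ ∩ γ).card : ℝ) * μ γ := by
  unfold eta
  rw [show (∑ e ∈ γ₁, ∑ γ ∈ Γ.filter (fun γ => e ∈ γ), μ γ) =
      ∑ e ∈ γ₁, ∑ γ ∈ Γ, if e ∈ γ then μ γ else 0 from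
    Finset.sum_congr rfl fun e _ => (Finset.sum_filter _ _)]
  rw [Finset.sum_comm]
  refine Finset.sum_congr rfl fun γ _ => ?_
  rw [← Finset.sum_filter, Finset.filter_mem_eq_inter, Finset.sum_const, nsmul_eq_mul]

lemma EO_perturb (Γ : Finset (Finset (Sym2 V))) (μ δ : Finset (Sym2 V) → ℝ) (t : ℝ) :
    EO Γ (fun γ => μ γ + t * δ γ) =
      EO Γ μ + 2 * t * (∑ γ ∈ Γ, ∑ γ' ∈ Γ, ((γ ∩ γ').card : ℝ) * μ γ * δ γ')
        + t ^ 2 * EO Γ δ := by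
  have hsymm : ∑ γ ∈ Γ, ∑ γ' ∈ Γ, ((γ ∩ γ').card : ℝ) * δ γ * μ γ' =
      ∑ γ ∈ Γ, ∑ γ' ∈ Γ, ((γ ∩ γ').card : ℝ) * μ γ * δ γ' := by
    rw [Finset.sum_comm]
    refine Finset.sum_congr rfl fun γ _ => Finset.sum_congr rfl fun γ' _ => ?_
    rw [Finset.inter_comm]
    ring
  unfold EO
  have hexp : ∀ γ ∈ Γ, ∑ γ' ∈ Γ, ((γ ∩ γ').card : ℝ) * (μ γ + t * δ γ) * (μ γ' + t * δ γ') =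
      (∑ γ' ∈ Γ, ((γ ∩ γ').card : ℝ) * μ γ * μ γ')
      + ((t * ∑ γ' ∈ Γ, ((γ ∩ γ').card : ℝ) * μ γ * δ γ')
      + ((t * ∑ γ' ∈ Γ, ((γ ∩ γ').card : ℝ) * δ γ * μ γ')
      + (t^2 * ∑ γ' ∈ Γ, ((γ ∩ γ').card : ℝ) * δ γ * δ γ'))) := by
    intro γ _
    rw [Finset.mul_sum, Finset.mul_sum, Finset.mul_sum, ← Finset.sum_add_distrib,
      ← Finset.sum_add_distrib, ← Finset.sum_add_distrib]
    exact Finset.sum_congr rfl fun γ' _ => by ring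
  rw [Finset.sum_congr rfl hexp, Finset.sum_add_distrib, Finset.sum_add_distrib,
    Finset.sum_add_distrib, ← Finset.mul_sum, ← Finset.mul_sum, ← Finset.mul_sum, hsymm]
  ring

lemma EO_nonneg (Γ : Finset (Finset (Sym2 V))) {μ : Finset (Sym2 V) → ℝ}
    (hμ : ∀ γ, 0 ≤ μ γ) : 0 ≤ EO Γ μ :=
  Finset.sum_nonneg fun γ _ => Finset.sum_nonneg fun γ' _ =>
    mul_nonneg (mul_nonneg (Nat.cast_nonneg _) (hμ γ)) (hμ γ')

lemma MEO_le (Γ : Finset (Finset (Sym2 V))) {μ : Finset (Sym2 V) → ℝ}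
    (hμ : IsPmf Γ μ) : MEO Γ ≤ EO Γ μ := by
  apply csInf_le
  · refine ⟨0, fun x hx => ?_⟩
    obtain ⟨ν, hν, rfl⟩ := hx
    exact EO_nonneg Γ hν.1
  · exact ⟨μ, hμ, rfl⟩

lemma uniform_isPmf {G : SimpleGraph V} (hne : (spanningTrees G).Nonempty) :
    IsPmf (spanningTrees G) (uniformPmf G) := by
  have hpos : (0:ℝ) < ((spanningTrees G).card : ℝ) := by
    exact_mod_cast Finset.card_pos.2 hne
  refine ⟨fun γ => ?_, fun γ h => if_neg h, ?_⟩
  · unfold uniformPmf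
    split
    · positivity
    · exact le_refl 0
  · unfold uniformPmf
    rw [Finset.sum_congr rfl (fun γ hγ => if_pos hγ), Finset.sum_const, nsmul_eq_mul]
    exact mul_inv_cancel₀ hpos.ne'

end STAux

namespace STAux
open SimpleGraph

variable {V : Type*} [Fintype V] [DecidableEq V]

lemma tree_sums_equal {G : SimpleGraph V} (hne : (spanningTrees G).Nonempty)
    (hopt : EO (spanningTrees G) (uniformPmf G) = MEO (spanningTrees G)) :
    ∀ γ₀ ∈ spanningTrees G, ∀ γ₁ ∈ spanningTrees G,
      ∑ e ∈ γ₀, eta (spanningTrees G) (uniformPmf G) e =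
      ∑ e ∈ γ₁, eta (spanningTrees G) (uniformPmf G) e := by
  set Γ := spanningTrees G with hΓ
  set μ₀ := uniformPmf G with hμ₀
  have hu : IsPmf Γ μ₀ := uniform_isPmf hne
  clear_value Γ μ₀
  set S : Finset (Sym2 V) → ℝ := fun γ => ∑ e ∈ γ, eta Γ μ₀ e with hS
  have key : ∀ γ₀ ∈ Γ, ∀ γ₁ ∈ Γ, ¬ (S γ₁ < S γ₀) := by
    intro γ₀ h₀ γ₁ h₁ hlt
    have hγne : γ₀ ≠ γ₁ := by rintro rfl; exact lt_irrefl _ hlt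
    set δ : Finset (Sym2 V) → ℝ :=
      fun γ => (if γ = γ₁ then 1 else 0) - (if γ = γ₀ then 1 else 0) with hδ
    set d := S γ₀ - S γ₁ with hd
    have hdpos : 0 < d := sub_pos.2 hlt
    set C := EO Γ δ with hC
    set N := ((Γ.card : ℕ) : ℝ) with hN
    have hNpos : 0 < N := by
      rw [hN]; exact_mod_cast Finset.card_pos.2 hne
    set t := min (N⁻¹) (d / (|C| + 1)) with ht
    have habs : (0:ℝ) < |C| + 1 := by positivity
    have htpos : 0 < t := lt_min (by positivity) (by positivity)
    have htN : t ≤ N⁻¹ := min_le_left _ _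
    clear_value d C N t
    have huval : ∀ γ ∈ Γ, μ₀ γ = N⁻¹ := by
      intro γ hγ
      rw [hμ₀]; unfold uniformPmf
      rw [if_pos (by rwa [← hΓ]), hN, hΓ]
    set μt := fun γ => μ₀ γ + t * δ γ with hμt
    have hδ₀ : δ γ₀ = -1 := by
      simp [hδ, hγne]
    have hδ₁ : δ γ₁ = 1 := by
      simp [hδ, Ne.symm hγne]
    have hpmf : IsPmf Γ μt := by
      refine ⟨fun γ => ?_, fun γ hγ => ?_, ?_⟩
      · by_cases hc1 : γ = γ₁
        · rw [hμt]; dsimp only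
          rw [hc1, hδ₁, huval γ₁ h₁]
          nlinarith
        · by_cases hc0 : γ = γ₀
          · rw [hμt]; dsimp only
            rw [hc0, hδ₀, huval γ₀ h₀]
            nlinarith
          · rw [hμt]; dsimp only
            rw [hδ]; dsimp only
            rw [if_neg hc1, if_neg hc0]
            have := hu.1 γ
            nlinarith
      · rw [hμt]; dsimp only
        rw [hu.2.1 γ hγ, hδ]; dsimp only
        rw [if_neg (by rintro rfl; exact hγ h₁), if_neg (by rintro rfl; exact hγ h₀)]
        ring
      · rw [hμt]
        rw [Finset.sum_add_distrib, ← Finset.mul_sum, hu.2.2, hδ]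
        dsimp only
        rw [Finset.sum_sub_distrib, Finset.sum_ite_eq' Γ γ₁ (fun _ => (1:ℝ)),
          Finset.sum_ite_eq' Γ γ₀ (fun _ => (1:ℝ)), if_pos h₁, if_pos h₀]
        ring
    have hcross : ∑ γ ∈ Γ, ∑ γ' ∈ Γ, ((γ ∩ γ').card : ℝ) * μ₀ γ * δ γ' = S γ₁ - S γ₀ := by
      have hinner : ∀ γ ∈ Γ, ∑ γ' ∈ Γ, ((γ ∩ γ').card : ℝ) * μ₀ γ * δ γ' =
          ((γ ∩ γ₁).card : ℝ) * μ₀ γ - ((γ ∩ γ₀).card : ℝ) * μ₀ γ := by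
        intro γ _
        have hterm : ∀ γ' ∈ Γ, ((γ ∩ γ').card : ℝ) * μ₀ γ * δ γ' =
            (if γ' = γ₁ then ((γ ∩ γ').card : ℝ) * μ₀ γ else 0)
              - (if γ' = γ₀ then ((γ ∩ γ').card : ℝ) * μ₀ γ else 0) := by
          intro γ' _
          rw [hδ]; dsimp only
          split_ifs <;> ring
        rw [Finset.sum_congr rfl hterm, Finset.sum_sub_distrib,
          Finset.sum_ite_eq' Γ γ₁ (fun γ' => ((γ ∩ γ').card : ℝ) * μ₀ γ),
          Finset.sum_ite_eq' Γ γ₀ (fun γ' => ((γ ∩ γ').card : ℝ) * μ₀ γ),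
          if_pos h₁, if_pos h₀]
      rw [Finset.sum_congr rfl hinner, Finset.sum_sub_distrib]
      have e1 : ∑ γ ∈ Γ, ((γ ∩ γ₁).card : ℝ) * μ₀ γ = S γ₁ := by
        rw [hS]; dsimp only
        rw [sum_eta Γ μ₀ γ₁]
        exact Finset.sum_congr rfl fun γ _ => by rw [Finset.inter_comm]
      have e0 : ∑ γ ∈ Γ, ((γ ∩ γ₀).card : ℝ) * μ₀ γ = S γ₀ := by
        rw [hS]; dsimp only
        rw [sum_eta Γ μ₀ γ₀]
        exact Finset.sum_congr rfl fun γ _ => by rw [Finset.inter_comm]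
      rw [e1, e0]
    have hEO : EO Γ μt = EO Γ μ₀ + 2 * t * (S γ₁ - S γ₀) + t^2 * C := by
      rw [hμt, EO_perturb Γ μ₀ δ t, hcross, hC]
    have htd : t * C < d := by
      have h1 : t ≤ d / (|C| + 1) := by rw [ht]; exact min_le_right _ _
      have h2 : t * C ≤ t * |C| := mul_le_mul_of_nonneg_left (le_abs_self C) htpos.le
      have h3 : t * |C| ≤ (d / (|C| + 1)) * |C| :=
        mul_le_mul_of_nonneg_right h1 (abs_nonneg C)
      have h4 : (d / (|C| + 1)) * |C| < d := by
        rw [div_mul_eq_mul_div, div_lt_iff₀ habs]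
        nlinarith [abs_nonneg C]
      linarith
    have hlt2 : EO Γ μt < EO Γ μ₀ := by
      rw [hEO]
      have : 2 * t * (S γ₁ - S γ₀) + t^2 * C < 0 := by
        have hexpand : 2 * t * (S γ₁ - S γ₀) + t^2 * C = t * (-2 * d + t * C) := by
          rw [hd]; ring
        rw [hexpand]
        have : -2 * d + t * C < 0 := by linarith
        exact mul_neg_of_pos_of_neg htpos this
      linarith
    have hge := MEO_le Γ hpmf
    rw [← hopt] at hge
    linarith
  intro γ₀ h₀ γ₁ h₁
  have h1 : S γ₀ ≤ S γ₁ := not_lt.1 (key γ₀ h₀ γ₁ h₁)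
  have h2 : S γ₁ ≤ S γ₀ := not_lt.1 (key γ₁ h₁ γ₀ h₀)
  simpa [hS] using le_antisymm h1 h2

end STAux

/-- a biconnected uniform graph is homogeneous. -/
theorem biconnected_uniform_is_homogeneous
    {V : Type*} [Fintype V] [DecidableEq V]
    (G : SimpleGraph V) (hG : G.Connected) (hE : G.edgeFinset.Nonempty)
    (hV : 3 ≤ Fintype.card V)
    (hbi : ∀ v : V, (G.induce ({v}ᶜ : Set V)).Connected)
    (huniform : EO (spanningTrees G) (uniformPmf G) = MEO (spanningTrees G)) :
    IsHomogeneous G ∧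
    ∀ e ∈ G.edgeFinset, ∀ e' ∈ G.edgeFinset,
      eta (spanningTrees G) (uniformPmf G) e = eta (spanningTrees G) (uniformPmf G) e' := by
  classical
  have hne : (spanningTrees G).Nonempty := STAux.spanningTrees_nonempty hG
  have hpmf : IsPmf (spanningTrees G) (uniformPmf G) := STAux.uniform_isPmf hne
  obtain ⟨γ, hγ⟩ := hne
  have hT : (SimpleGraph.fromEdgeSet (↑γ : Set (Sym2 V))).IsTree :=
    STAux.isTree_of_mem_spanningTrees hγ
  have hsub : (↑γ : Set (Sym2 V)) ⊆ G.edgeSet := (STAux.mem_spanningTrees_iff.1 hγ).1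
  have hsums := STAux.tree_sums_equal ⟨γ, hγ⟩ huniform
  have hsw : ∀ x y : V, G.Adj x y → s(x,y) ∉ γ →
      ∀ f ∈ (STAux.upath hT x y).edges,
        eta (spanningTrees G) (uniformPmf G) s(x,y) =
        eta (spanningTrees G) (uniformPmf G) f := by
    intro x y hxy hnm f hf
    have hmem' := STAux.swap_mem_spanningTrees hγ hT hxy hnm hf
    have hfγ : f ∈ γ := by
      have := (STAux.upath hT x y).edges_subset_edgeSet hf
      rw [SimpleGraph.edgeSet_fromEdgeSet, Set.mem_diff] at this
      exact this.1
    have heq := hsums γ hγ _ hmem'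
    have hnm2 : s(x,y) ∉ γ.erase f := fun hh => hnm (Finset.mem_of_mem_erase hh)
    rw [Finset.sum_insert hnm2] at heq
    have herase : ∑ e ∈ γ.erase f, eta (spanningTrees G) (uniformPmf G) e =
        ∑ e ∈ γ, eta (spanningTrees G) (uniformPmf G) e -
          eta (spanningTrees G) (uniformPmf G) f :=
      Finset.sum_erase_eq_sub hfγ
    rw [herase] at heq
    linarith
  have hkey : ∀ e ∈ G.edgeSet, ∀ e' ∈ G.edgeSet,
      eta (spanningTrees G) (uniformPmf G) e = eta (spanningTrees G) (uniformPmf G) e' :=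
    STAux.W_const_all hsub hT _ hsw hbi
  obtain ⟨e₀, he₀⟩ := hE
  constructor
  · exact ⟨uniformPmf G, hpmf, eta (spanningTrees G) (uniformPmf G) e₀,
      fun e he => hkey e (SimpleGraph.mem_edgeFinset.1 he) e₀
        (SimpleGraph.mem_edgeFinset.1 he₀)⟩
  · intro e he e' he'
    exact hkey e (SimpleGraph.mem_edgeFinset.1 he) e' (SimpleGraph.mem_edgeFinset.1 he')
end
end
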